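/- arXiv:1104.0472 — 14 statements merged into one kernel-verified Lean document; each statement's English description precedes it below -/
import Mathlib

section
/- Let F be a field and α₁,…,α_k distinct elements of F. Then there exist nonzero constants β₁,…,β_k ∈ F and γ = V(α₁,…,α_k) ≠ 0 such that the polynomial identity ∑_{i=1}^k (t+αᵢ)^{k-1}/βᵢ = γ holds in F[t]. -/
open Polynomial

lemma basis_coeff_top {F : Type*} [Field F] {k : ℕ} (α : Fin k → F) (i : Fin k) :
    (Lagrange.basis Finset.univ α i).coeff (k - 1) =
      ∏ j ∈ Finset.univ.erase i, (α i - α j)⁻¹ := by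
  have hcard : (Finset.univ.erase i).card = k - 1 := by
    simp [Finset.card_erase_of_mem]
  unfold Lagrange.basis Lagrange.basisDivisor
  rw [Finset.prod_mul_distrib, ← map_prod]
  have hm : (∏ j ∈ Finset.univ.erase i, (X - C (α j))).Monic :=
    monic_prod_of_monic _ _ (fun j _ => monic_X_sub_C _)
  have hdeg : (∏ j ∈ Finset.univ.erase i, (X - C (α j))).natDegree = k - 1 := by
    rw [natDegree_prod_of_monic _ _ (fun j _ => monic_X_sub_C _)]
    simp [hcard]
  rw [coeff_C_mul, ← hdeg, hm.coeff_natDegree, mul_one]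

lemma key_sum {F : Type*} [Field F] {k : ℕ} (α : Fin k → F) (hα : Function.Injective α)
    {r : ℕ} (hr : r < k) :
    ∑ i, α i ^ r * ∏ j ∈ Finset.univ.erase i, (α i - α j)⁻¹ =
      if r = k - 1 then 1 else 0 := by
  have hinj : Set.InjOn α ↑(Finset.univ : Finset (Fin k)) := hα.injOn
  have hdeg : (X ^ r : F[X]).degree < (Finset.univ : Finset (Fin k)).card := by
    rw [degree_X_pow]
    simp only [Finset.card_univ, Fintype.card_fin]
    exact_mod_cast hr
  have h := Lagrange.eq_interpolate hinj hdeg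
  have h2 := congrArg (fun p : F[X] => p.coeff (k - 1)) h
  simp only [Lagrange.interpolate_apply, finset_sum_coeff, coeff_C_mul, coeff_X_pow,
    eval_pow, eval_X, basis_coeff_top α] at h2
  rw [← h2]
  by_cases hrk : r = k - 1 <;> simp [hrk, eq_comm]

/-- For distinct `α₁,…,α_k` in a field `F`, there are nonzero constants
`β₁,…,β_k` such that `∑ (t+αᵢ)^(k-1)/βᵢ = γ` in `F[t]`, where
`γ = V(α₁,…,α_k) ≠ 0` is the Vandermonde determinant. -/
theorem sum_pow_pred_eq_vandermonde (F : Type*) [Field F] (k : ℕ) (hk : 2 ≤ k)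
    (α : Fin k → F) (hα : Function.Injective α) :
    ∃ β : Fin k → F, (∀ i, β i ≠ 0) ∧
      (∏ p ∈ Finset.univ.filter (fun p : Fin k × Fin k => p.1 < p.2),
          (α p.1 - α p.2)) ≠ 0 ∧
      (∑ i, Polynomial.C (β i)⁻¹ * (Polynomial.X + Polynomial.C (α i)) ^ (k - 1)) =
        Polynomial.C (∏ p ∈ Finset.univ.filter (fun p : Fin k × Fin k => p.1 < p.2),
          (α p.1 - α p.2)) := by
  set γ := ∏ p ∈ Finset.univ.filter (fun p : Fin k × Fin k => p.1 < p.2),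
      (α p.1 - α p.2) with hγdef
  have hγ : γ ≠ 0 := by
    refine Finset.prod_ne_zero_iff.mpr fun p hp => sub_ne_zero.mpr fun h => ?_
    have := hα h
    simp only [Finset.mem_filter] at hp
    exact absurd this (ne_of_lt hp.2)
  have hprod : ∀ i : Fin k, (∏ j ∈ Finset.univ.erase i, (α i - α j)) ≠ 0 := by
    intro i
    refine Finset.prod_ne_zero_iff.mpr fun j hj => sub_ne_zero.mpr fun h => ?_
    have := hα h
    simp only [Finset.mem_erase] at hj
    exact hj.1 this.symm
  refine ⟨fun i => γ⁻¹ * ∏ j ∈ Finset.univ.erase i, (α i - α j),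
    fun i => mul_ne_zero (inv_ne_zero hγ) (hprod i), hγ, ?_⟩
  have hβinv : ∀ i : Fin k,
      (γ⁻¹ * ∏ j ∈ Finset.univ.erase i, (α i - α j))⁻¹ =
        γ * ∏ j ∈ Finset.univ.erase i, (α i - α j)⁻¹ := by
    intro i
    rw [mul_inv, inv_inv, ← Finset.prod_inv_distrib]
  simp only [hβinv, map_mul]
  simp only [mul_assoc]
  rw [← Finset.mul_sum]
  have hS : (∑ i, C (∏ j ∈ Finset.univ.erase i, (α i - α j)⁻¹) *
      (X + C (α i)) ^ (k - 1)) = (1 : F[X]) := by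
    ext m
    simp only [finset_sum_coeff, coeff_C_mul, coeff_X_add_C_pow]
    have hmr : ∀ i : Fin k, (∏ j ∈ Finset.univ.erase i, (α i - α j)⁻¹) *
        (α i ^ (k - 1 - m) * ((k - 1).choose m : F)) =
        (α i ^ (k - 1 - m) * ∏ j ∈ Finset.univ.erase i, (α i - α j)⁻¹) *
          ((k - 1).choose m : F) := by intro i; ring
    simp only [hmr]
    rw [← Finset.sum_mul, key_sum α hα (by omega)]
    · rcases Nat.eq_zero_or_pos m with hm | hm
      · subst hm; simp
      · have h1 : k - 1 - m ≠ k - 1 := by omega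
        simp [h1, coeff_one, hm.ne']
  rw [hS, mul_one]
end

section
/- Let F be a field whose characteristic does not divide k, and let α₁,…,α_k be distinct elements of F. Then there exist nonzero β₁,…,β_k ∈ F, γ = V(α₁,…,α_k) ≠ 0, and δ ∈ F such that ∑_{i=1}^k (t+αᵢ)^k/βᵢ = γkt + δ as polynomials in F[t]. -/
open Polynomial

open Finset in
lemma lagrange_power_sum {F : Type*} [Field F] {k : ℕ} (hk : 0 < k)
    (α : Fin k → F) (hα : Function.Injective α) {m : ℕ} (hm : m < k) :
    ∑ i, α i ^ m * (∏ j ∈ Finset.univ.erase i, (α i - α j))⁻¹ =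
      if m = k - 1 then 1 else 0 := by
  have hvs : Set.InjOn α (Finset.univ : Finset (Fin k)) := hα.injOn
  have hdeg : (X ^ m : F[X]).degree < ((Finset.univ : Finset (Fin k)).card : WithBot ℕ) := by
    rw [Finset.card_univ, Fintype.card_fin]
    exact lt_of_le_of_lt (degree_X_pow_le m)
      (by exact_mod_cast hm : ((m : ℕ) : WithBot ℕ) < (k : ℕ))
  have h := Lagrange.eq_interpolate hvs hdeg
  have h2 := congrArg (fun p : F[X] => p.coeff (k - 1)) h
  simp only [Lagrange.interpolate_apply] at h2
  rw [coeff_X_pow, finset_sum_coeff] at h2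
  have hbasis : ∀ i : Fin k, (Lagrange.basis Finset.univ α i).coeff (k - 1) =
      (∏ j ∈ Finset.univ.erase i, (α i - α j))⁻¹ := by
    intro i
    have hnd : (Lagrange.basis Finset.univ α i).natDegree = k - 1 := by
      simpa using Lagrange.natDegree_basis hvs (Finset.mem_univ i)
    rw [← hnd, Polynomial.coeff_natDegree, Lagrange.basis,
      Polynomial.leadingCoeff_prod]
    rw [← Finset.prod_inv_distrib]
    refine Finset.prod_congr rfl fun j hj => ?_
    have hne : α i ≠ α j := fun h => (Finset.mem_erase.mp hj).1
      (hα h.symm ▸ rfl) |>.elim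
    unfold Lagrange.basisDivisor
    rw [leadingCoeff_mul, leadingCoeff_C, (monic_X_sub_C (α j)).leadingCoeff, mul_one]
  simp only [coeff_C_mul, hbasis, eval_pow, eval_X] at h2
  rw [← h2]
  simp [eq_comm]

/-- For distinct `α₁,…,α_k` in a field whose characteristic does not divide `k`,
there are nonzero `β₁,…,β_k`, `γ = V(α₁,…,α_k) ≠ 0` and `δ ∈ F` such that
`∑ (t+αᵢ)^k/βᵢ = γ k t + δ` in `F[t]`. -/
theorem sum_pow_eq_linear (F : Type*) [Field F] (k : ℕ) (hk : 2 ≤ k)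
    (hchar : (k : F) ≠ 0) (α : Fin k → F) (hα : Function.Injective α) :
    ∃ (β : Fin k → F) (δ : F), (∀ i, β i ≠ 0) ∧
      (∏ p ∈ Finset.univ.filter (fun p : Fin k × Fin k => p.1 < p.2),
          (α p.1 - α p.2)) ≠ 0 ∧
      (∑ i, Polynomial.C (β i)⁻¹ * (Polynomial.X + Polynomial.C (α i)) ^ k) =
        Polynomial.C ((∏ p ∈ Finset.univ.filter (fun p : Fin k × Fin k => p.1 < p.2),
          (α p.1 - α p.2)) * (k : F)) * Polynomial.X + Polynomial.C δ := by
  set γ : F := ∏ p ∈ Finset.univ.filter (fun p : Fin k × Fin k => p.1 < p.2),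
      (α p.1 - α p.2) with hγdef
  have hγ : γ ≠ 0 := by
    rw [hγdef]
    refine Finset.prod_ne_zero_iff.mpr fun p hp => ?_
    have : p.1 < p.2 := (Finset.mem_filter.mp hp).2
    exact sub_ne_zero.mpr (fun h => absurd (hα h) this.ne)
  have hπ : ∀ i : Fin k, (∏ j ∈ Finset.univ.erase i, (α i - α j)) ≠ 0 := by
    intro i
    refine Finset.prod_ne_zero_iff.mpr fun j hj => ?_
    exact sub_ne_zero.mpr (fun h => (Finset.mem_erase.mp hj).1 ((hα h).symm))
  refine ⟨fun i => (∏ j ∈ Finset.univ.erase i, (α i - α j)) * γ⁻¹,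
    ∑ i, γ * (∏ j ∈ Finset.univ.erase i, (α i - α j))⁻¹ * α i ^ k,
    fun i => mul_ne_zero (hπ i) (inv_ne_zero hγ), hγ, ?_⟩
  have hβinv : ∀ i : Fin k,
      ((∏ j ∈ Finset.univ.erase i, (α i - α j)) * γ⁻¹)⁻¹ =
        γ * (∏ j ∈ Finset.univ.erase i, (α i - α j))⁻¹ := by
    intro i; rw [mul_inv, inv_inv, mul_comm]
  have hkpos : 0 < k := lt_of_lt_of_le two_pos hk
  ext n
  simp only [hβinv, finset_sum_coeff, coeff_C_mul, coeff_X_add_C_pow,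
    coeff_add, coeff_C_mul, coeff_X, coeff_C]
  rcases Nat.lt_or_ge n 2 with hn | hn
  · interval_cases n
    · -- constant coefficient
      simp only [Nat.choose_zero_right, Nat.cast_one, mul_one, Nat.sub_zero]
      simp
    · -- linear coefficient
      simp only [Nat.choose_one_right, if_pos rfl, if_neg one_ne_zero]
      have := lagrange_power_sum hkpos α hα (m := k - 1) (Nat.sub_lt hkpos one_pos)
      rw [if_pos rfl] at this
      have h2 : ∑ i, γ * (∏ j ∈ Finset.univ.erase i, (α i - α j))⁻¹ *
          (α i ^ (k - 1) * (k : F)) = γ * (k : F) := by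
        calc ∑ i, γ * (∏ j ∈ Finset.univ.erase i, (α i - α j))⁻¹ *
              (α i ^ (k - 1) * (k : F))
            = (γ * (k:F)) * ∑ i, α i ^ (k-1) *
              (∏ j ∈ Finset.univ.erase i, (α i - α j))⁻¹ := by
              rw [Finset.mul_sum]; exact Finset.sum_congr rfl fun i _ => by ring
          _ = γ * (k : F) := by rw [this, mul_one]
      simpa using h2
  · -- higher coefficients vanish
    have hifX : (if 1 = n then (1:F) else 0) = 0 := if_neg (by omega)
    have hifC : (if n = 0 then
        (∑ i, γ * (∏ j ∈ Finset.univ.erase i, (α i - α j))⁻¹ * α i ^ k) else 0) = 0 :=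
      if_neg (by omega)
    rw [hifX, hifC, mul_zero, add_zero]
    rcases Nat.lt_or_ge n (k+1) with hnk | hnk
    · have hmlt : k - n < k := by omega
      have := lagrange_power_sum hkpos α hα (m := k - n) hmlt
      rw [if_neg (by omega)] at this
      calc ∑ i, γ * (∏ j ∈ Finset.univ.erase i, (α i - α j))⁻¹ *
            (α i ^ (k - n) * (k.choose n : F))
          = (γ * (k.choose n : F)) * ∑ i, α i ^ (k-n) *
            (∏ j ∈ Finset.univ.erase i, (α i - α j))⁻¹ := by
            rw [Finset.mul_sum]; exact Finset.sum_congr rfl fun i _ => by ring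
        _ = 0 := by rw [this, mul_zero]
    · have : k.choose n = 0 := Nat.choose_eq_zero_of_lt (by omega)
      simp [this]
end

section
/- Let A be an integral domain and k ≥ 2, s ≥ 1, n ≥ 1. Every element of A[t] is a sum of s k-th powers in A[t] if and only if every element of A[x₁,…,xₙ] is a sum of s k-th powers in A[x₁,…,xₙ]. -/
/-- Every element of `A[t]` is a sum of `s` `k`-th powers iff every element of
`A[x₁,…,xₙ]` is a sum of `s` `k`-th powers. -/
theorem waring_polynomial_iff_waring_mvPolynomial (A : Type*) [CommRing A] [IsDomain A]
    (k s n : ℕ) (hk : 2 ≤ k) (hs : 1 ≤ s) (hn : 1 ≤ n) :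
    (∀ P : Polynomial A, ∃ Q : Fin s → Polynomial A, P = ∑ i, Q i ^ k) ↔
    (∀ P : MvPolynomial (Fin n) A, ∃ Q : Fin s → MvPolynomial (Fin n) A,
        P = ∑ i, Q i ^ k) := by
  constructor
  · intro h P
    obtain ⟨q, hq⟩ := h Polynomial.X
    refine ⟨fun i => Polynomial.aeval P (q i), ?_⟩
    have := congrArg (Polynomial.aeval P) hq
    simpa using this
  · intro h P
    obtain ⟨Q, hQ⟩ := h (MvPolynomial.X ⟨0, hn⟩)
    refine ⟨fun i => MvPolynomial.aeval (fun _ => P) (Q i), ?_⟩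
    have := congrArg (MvPolynomial.aeval (fun _ => P)) hQ
    simpa using this
end

section
/- Let A be an integral domain, k ≥ 2, s ≥ 1. Then every element of A[t] is a sum of s k-th powers in A[t] if and only if the polynomial t itself is a sum of s k-th powers in A[t]. -/
/-- Every element of `A[t]` is a sum of `s` `k`-th powers iff the polynomial
`t` itself is a sum of `s` `k`-th powers in `A[t]`. -/
theorem waring_polynomial_iff_X (A : Type*) [CommRing A] [IsDomain A]
    (k s : ℕ) (hk : 2 ≤ k) (hs : 1 ≤ s) :
    (∀ P : Polynomial A, ∃ Q : Fin s → Polynomial A, P = ∑ i, Q i ^ k) ↔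
    (∃ Q : Fin s → Polynomial A, Polynomial.X = ∑ i, Q i ^ k) := by
  constructor
  · intro h; exact h Polynomial.X
  · intro ⟨Q, hQ⟩ P
    refine ⟨fun i => (Q i).comp P, ?_⟩
    have := congrArg (fun R => Polynomial.comp R P) hQ
    simpa [Polynomial.X_comp, Polynomial.eval₂_finset_sum, Polynomial.pow_comp] using this
end

section
/- Let F be a field with more than k elements whose characteristic does not divide k, and such that every element of F is a sum of k-th powers of elements of F. Then for every n ≥ 1, every polynomial P ∈ F[x₁,…,xₙ] is a sum of finitely many k-th powers of polynomials in F[x₁,…,xₙ]. -/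
open MvPolynomial Finset

/-- The additive submonoid of sums of `k`-th powers. -/
private def Spow (k : ℕ) (R : Type*) [CommSemiring R] : AddSubmonoid R :=
  AddSubmonoid.closure (Set.range (· ^ k : R → R))

private lemma pow_mem_Spow {R : Type*} [CommSemiring R] {k : ℕ} (x : R) :
    x ^ k ∈ Spow k R :=
  AddSubmonoid.subset_closure ⟨x, rfl⟩

private lemma Spow_mul {R : Type*} [CommSemiring R] {k : ℕ} {a b : R}
    (ha : a ∈ Spow k R) (hb : b ∈ Spow k R) : a * b ∈ Spow k R := by
  induction ha using AddSubmonoid.closure_induction with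
  | mem x hx =>
    obtain ⟨x, rfl⟩ := hx
    induction hb using AddSubmonoid.closure_induction with
    | mem y hy => obtain ⟨y, rfl⟩ := hy; exact (mul_pow x y k) ▸ pow_mem_Spow (x * y)
    | zero => simpa using (Spow k R).zero_mem
    | add y z _ _ hy hz => rw [mul_add]; exact (Spow k R).add_mem hy hz
  | zero => simpa using (Spow k R).zero_mem
  | add x y _ _ hx hy => rw [add_mul]; exact (Spow k R).add_mem hx hy

private lemma Spow_to_fin {R : Type*} [CommSemiring R] {k : ℕ} {p : R}
    (hp : p ∈ Spow k R) : ∃ (s : ℕ) (Q : Fin s → R), p = ∑ i, Q i ^ k := by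
  induction hp using AddSubmonoid.closure_induction with
  | mem x hx => obtain ⟨x, rfl⟩ := hx; exact ⟨1, fun _ => x, by simp⟩
  | zero => exact ⟨0, Fin.elim0, by simp⟩
  | add x y _ _ hx hy =>
    obtain ⟨s, Q, rfl⟩ := hx
    obtain ⟨t, P, rfl⟩ := hy
    exact ⟨s + t, Fin.append Q P, by
      rw [Fin.sum_univ_add]
      simp [Fin.append_left, Fin.append_right]⟩

/-- Solving a Vandermonde system: coefficients `lam` with
`∑ j, lam j * c j ^ m = δ_{m, k-1} · k⁻¹`. -/
private lemma vand_coeffs (F : Type*) [Field F] (k : ℕ) (c : Fin (k+1) ↪ F) :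
    ∃ lam : Fin (k+1) → F, ∀ m : Fin (k+1),
      ∑ j, lam j * c j ^ (m : ℕ) = if (m : ℕ) = k - 1 then (k : F)⁻¹ else 0 := by
  set A := Matrix.vandermonde (c : Fin (k+1) → F) with hA
  have hdet : IsUnit A.det := by
    rw [hA, Matrix.det_vandermonde]
    apply IsUnit.mk0
    rw [Finset.prod_ne_zero_iff]
    intro i _
    rw [Finset.prod_ne_zero_iff]
    intro j hj
    have : i ≠ j := fun h => by simp [h] at hj
    exact sub_ne_zero.mpr (fun h => this (c.injective h).symm)
  set u : Fin (k+1) → F := fun m => if (m : ℕ) = k - 1 then (k : F)⁻¹ else 0 with hu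
  refine ⟨Matrix.vecMul u A⁻¹, fun m => ?_⟩
  have h1 : Matrix.vecMul (Matrix.vecMul u A⁻¹) A = u := by
    rw [Matrix.vecMul_vecMul, Matrix.nonsing_inv_mul A hdet, Matrix.vecMul_one]
  have := congrFun h1 m
  simpa [Matrix.vecMul, dotProduct, hA, Matrix.vandermonde] using this

/-- The key polynomial identity expressing a variable as a linear combination
of `k`-th powers of linear polynomials. -/
private lemma X_as_comb (F : Type*) [Field F] (k : ℕ) (hk : 2 ≤ k) (hchar : (k : F) ≠ 0)
    (n : ℕ) (t : Fin n) (c lam : Fin (k+1) → F)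
    (hlam : ∀ m : Fin (k+1), ∑ j, lam j * c j ^ (m : ℕ) =
      if (m : ℕ) = k - 1 then (k : F)⁻¹ else 0) :
    ∑ j, C (lam j) * (X t + C (c j)) ^ k = (X (R := F) t) := by
  have key : ∀ i ∈ range (k+1), ∑ j, lam j * c j ^ (k - i) =
      if i = 1 then (k : F)⁻¹ else 0 := by
    intro i hi
    rw [mem_range] at hi
    have := hlam ⟨k - i, by omega⟩
    simp only at this
    rw [this]
    congr 1
    simp only [eq_iff_iff]
    omega
  calc ∑ j, C (lam j) * (X t + C (c j)) ^ k
      = ∑ j, ∑ i ∈ range (k+1),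
          C (lam j) * (X t ^ i * C (c j) ^ (k - i) * (k.choose i : MvPolynomial (Fin n) F)) := by
        refine Finset.sum_congr rfl fun j _ => ?_
        rw [add_pow, Finset.mul_sum]
    _ = ∑ i ∈ range (k+1), X t ^ i * (k.choose i : MvPolynomial (Fin n) F) *
          C (∑ j, lam j * c j ^ (k - i)) := by
        rw [Finset.sum_comm]
        refine Finset.sum_congr rfl fun i _ => ?_
        rw [map_sum, Finset.mul_sum]
        refine Finset.sum_congr rfl fun j _ => ?_
        rw [C_mul, C_pow]
        ring
    _ = X t ^ 1 * (k.choose 1 : MvPolynomial (Fin n) F) * C ((k:F)⁻¹) := by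
        rw [Finset.sum_eq_single_of_mem 1 (by rw [mem_range]; omega)]
        · rw [key 1 (by rw [mem_range]; omega)]; simp
        · intro i hi hne
          rw [key i hi, if_neg hne, map_zero, mul_zero]
    _ = X t := by
        rw [pow_one, Nat.choose_one_right]
        rw [← C_eq_coe_nat, mul_assoc, ← C_mul, mul_inv_cancel₀ hchar, C_1, mul_one]

/-- If `F` has more than `k` elements, its characteristic does not divide `k`,
and every element of `F` is a (finite) sum of `k`-th powers, then every
polynomial in `F[x₁,…,xₙ]` is a finite sum of `k`-th powers. -/
theorem mvPolynomial_sum_of_kth_powers (F : Type*) [Field F] (k : ℕ) (hk : 2 ≤ k)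
    (hcard : (k : Cardinal) < Cardinal.mk F) (hchar : (k : F) ≠ 0)
    (hW : ∀ a : F, ∃ (s : ℕ) (b : Fin s → F), a = ∑ i, b i ^ k) :
    ∀ n : ℕ, 1 ≤ n → ∀ P : MvPolynomial (Fin n) F,
      ∃ (s : ℕ) (Q : Fin s → MvPolynomial (Fin n) F), P = ∑ i, Q i ^ k := by
  intro n _ P
  -- constants are sums of k-th powers
  have hconst : ∀ a : F, (C a : MvPolynomial (Fin n) F) ∈ Spow k (MvPolynomial (Fin n) F) := by
    intro a
    obtain ⟨s, b, rfl⟩ := hW a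
    rw [map_sum]
    refine AddSubmonoid.sum_mem _ fun i _ => ?_
    rw [map_pow]
    exact pow_mem_Spow _
  -- variables are sums of k-th powers, via the Vandermonde argument
  have hvar : ∀ t : Fin n, (X t : MvPolynomial (Fin n) F) ∈ Spow k (MvPolynomial (Fin n) F) := by
    intro t
    obtain ⟨c⟩ : Nonempty (Fin (k+1) ↪ F) := by
      rw [← Cardinal.lift_mk_le']
      simp only [Cardinal.mk_fin, Cardinal.lift_natCast]
      calc ((k+1 : ℕ) : Cardinal) = (k : Cardinal) + 1 := by push_cast; ring
        _ ≤ Order.succ (k : Cardinal) := Cardinal.add_one_le_succ _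
        _ ≤ Cardinal.lift.{0} (Cardinal.mk F) := by
            rw [Cardinal.lift_uzero]; exact Order.succ_le_of_lt hcard
    obtain ⟨lam, hlam⟩ := vand_coeffs F k c
    rw [← X_as_comb F k hk hchar n t c lam hlam]
    exact AddSubmonoid.sum_mem _ fun j _ =>
      Spow_mul (hconst (lam j)) (pow_mem_Spow _)
  -- conclude by induction on the polynomial
  have hmem : P ∈ Spow k (MvPolynomial (Fin n) F) := by
    induction P using MvPolynomial.induction_on with
    | C a => exact hconst a
    | add p q hp hq => exact AddSubmonoid.add_mem _ hp hq
    | mul_X p t hp => exact Spow_mul hp (hvar t)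
  exact Spow_to_fin hmem
end

section
/- Let F be a field with more than k distinct elements whose characteristic does not divide k. Every polynomial P ∈ F[x₁,…,xₙ] of degree d can be written as P = δ₁Q₁^k + ⋯ + δ_kQ_k^k where δᵢ ∈ F and Qᵢ ∈ F[x₁,…,xₙ] with deg Qᵢ^k ≤ kd. -/
open Polynomial in
/-- Key univariate identity: there are coefficients `δ i` and shifts `a i` with
`∑ i, δ i * (X + a i) ^ k = X`. -/
theorem univ_pow_identity (F : Type*) [Field F] (k : ℕ) (hk : 2 ≤ k)
    (hcard : (k : Cardinal) < Cardinal.mk F) (hchar : (k : F) ≠ 0) :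
    ∃ (δ a : Fin k → F),
      (∑ i, Polynomial.C (δ i) * (X + Polynomial.C (a i)) ^ k) = (X : F[X]) := by
  obtain ⟨t⟩ : Nonempty (Fin k ↪ F) := by
    rw [← Cardinal.lift_mk_le', Cardinal.mk_fin, Cardinal.lift_natCast, Cardinal.lift_uzero]
    exact hcard.le
  set A : Matrix (Fin k) (Fin k) F := (Matrix.vandermonde t).transpose with hA
  have hdet : IsUnit A.det := by
    rw [hA, Matrix.det_transpose]
    exact (Matrix.det_vandermonde_ne_zero_iff.mpr t.injective).isUnit
  set e : Fin k → F := fun m => if (m : ℕ) = k - 1 then (k : F)⁻¹ else 0 with he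
  set δ : Fin k → F := A⁻¹.mulVec e with hδ
  have hAδ : A.mulVec δ = e := by
    rw [hδ, Matrix.mulVec_mulVec, Matrix.mul_nonsing_inv _ hdet, Matrix.one_mulVec]
  have hsum : ∀ m : ℕ, m < k → ∑ i, δ i * t i ^ m = if m = k - 1 then (k : F)⁻¹ else 0 := by
    intro m hm
    have h := congrFun hAδ ⟨m, hm⟩
    simp only [Matrix.mulVec, dotProduct, hA, Matrix.transpose_apply,
      Matrix.vandermonde, Matrix.of_apply, he] at h
    rw [← h]
    exact Finset.sum_congr rfl fun i _ => mul_comm _ _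
  set c : F := ∑ i, δ i * t i ^ k with hc
  have h1 : (∑ i, Polynomial.C (δ i) * (X + Polynomial.C (t i)) ^ k)
      = X + Polynomial.C c := by
    ext j
    rw [Polynomial.finset_sum_coeff]
    simp only [Polynomial.coeff_C_mul, Polynomial.coeff_X_add_C_pow]
    rw [Polynomial.coeff_add, Polynomial.coeff_X, Polynomial.coeff_C]
    rcases Nat.lt_or_ge j 2 with hj | hj
    · interval_cases j
      · simp [hc]
      · have h := hsum (k - 1) (by omega)
        rw [if_pos rfl] at h
        rw [if_pos rfl, if_neg (by omega : ¬ ((1:ℕ) = 0)), add_zero]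
        simp only [Nat.choose_one_right]
        calc (∑ i, δ i * (t i ^ (k - 1) * (k : F)))
            = (∑ i, δ i * t i ^ (k - 1)) * (k : F) := by
              rw [Finset.sum_mul]; exact Finset.sum_congr rfl fun i _ => (mul_assoc _ _ _).symm
          _ = 1 := by rw [h, inv_mul_cancel₀ hchar]
    · rw [if_neg (by omega : ¬ (1 = j)), if_neg (by omega : ¬ (j = 0)), add_zero]
      rcases le_or_gt j k with hjk | hjk
      · have h0 := hsum (k - j) (by omega)
        rw [if_neg (by omega)] at h0
        calc (∑ i, δ i * (t i ^ (k - j) * (k.choose j : F)))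
            = (∑ i, δ i * t i ^ (k - j)) * (k.choose j : F) := by
              rw [Finset.sum_mul]; exact Finset.sum_congr rfl fun i _ => (mul_assoc _ _ _).symm
          _ = 0 := by rw [h0, zero_mul]
      · simp [Nat.choose_eq_zero_of_lt hjk]
  refine ⟨δ, fun i => t i - c, ?_⟩
  have h2 := congrArg (Polynomial.aeval (X - Polynomial.C c : F[X])) h1
  simp only [map_sum, map_mul, map_pow, map_add, Polynomial.aeval_X, Polynomial.aeval_C,
    Polynomial.algebraMap_eq] at h2
  have hbase : ∀ i : Fin k, (X - Polynomial.C c + Polynomial.C (t i) : F[X])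
      = X + Polynomial.C (t i - c) := by intro i; rw [map_sub]; ring
  have hrhs : (X - Polynomial.C c + Polynomial.C c : F[X]) = X := by ring
  simp only [hbase, hrhs] at h2
  exact h2

/-- Every polynomial of degree `d` over a suitable field is a combination
`δ₁Q₁^k + ⋯ + δ_kQ_k^k` with `deg Qᵢ^k ≤ kd`. -/
theorem decomposition_k_terms_scaled (F : Type*) [Field F] (k : ℕ) (hk : 2 ≤ k)
    (hcard : (k : Cardinal) < Cardinal.mk F) (hchar : (k : F) ≠ 0)
    (n d : ℕ) (hn : 1 ≤ n) (P : MvPolynomial (Fin n) F) (hP : P.totalDegree = d) :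
    ∃ (δ : Fin k → F) (Q : Fin k → MvPolynomial (Fin n) F),
      P = ∑ i, MvPolynomial.C (δ i) * Q i ^ k ∧
      ∀ i, (Q i ^ k).totalDegree ≤ k * d := by
  obtain ⟨δ, a, hid⟩ := univ_pow_identity F k hk hcard hchar
  refine ⟨δ, fun i => P + MvPolynomial.C (a i), ?_, ?_⟩
  · have h2 := congrArg (Polynomial.aeval (R := F) P) hid
    simp only [map_sum, map_mul, map_pow, map_add, Polynomial.aeval_X, Polynomial.aeval_C,
      MvPolynomial.algebraMap_eq] at h2
    exact h2.symm
  · intro i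
    calc ((P + MvPolynomial.C (a i)) ^ k).totalDegree
        ≤ k * (P + MvPolynomial.C (a i)).totalDegree := MvPolynomial.totalDegree_pow _ _
      _ ≤ k * d := by
          refine Nat.mul_le_mul_left k ?_
          refine le_trans (MvPolynomial.totalDegree_add _ _) ?_
          simp [MvPolynomial.totalDegree_C, hP]
end

section
/- Let F be a field with more than k elements whose characteristic does not divide k, such that every element of F is a sum of w k-th powers. Every polynomial P ∈ F[x₁,…,xₙ] of degree d can be written as P = Q₁^k + ⋯ + Q_s^k for some s ≤ k·w, with Qᵢ ∈ F[x₁,…,xₙ] and deg Qᵢ^k ≤ kd. -/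
open Matrix in
lemma my_vandermonde_solve {F : Type*} [Field F] {k : ℕ} (a : Fin k → F)
    (ha : Function.Injective a) (c : Fin k → F) :
    ∃ l : Fin k → F, ∀ m : Fin k, ∑ i, l i * a i ^ (m : ℕ) = c m := by
  set A := (Matrix.vandermonde a)ᵀ with hA
  have hdet : IsUnit A.det := by
    rw [Matrix.det_transpose]
    exact (Matrix.det_vandermonde_ne_zero_iff.mpr ha).isUnit
  refine ⟨A⁻¹ *ᵥ c, fun m => ?_⟩
  have : A *ᵥ (A⁻¹ *ᵥ c) = c := by
    rw [Matrix.mulVec_mulVec, Matrix.mul_nonsing_inv _ hdet, Matrix.one_mulVec]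
  have := congrFun this m
  simpa [hA, Matrix.transpose_apply, Matrix.mulVec, dotProduct, Matrix.vandermonde, mul_comm] using this

open Polynomial in
lemma my_identity {F : Type*} [Field F] {k : ℕ} (hk : 2 ≤ k)
    (hcard : (k : Cardinal) < Cardinal.mk F) (hchar : (k : F) ≠ 0) :
    ∃ (a l : Fin k → F) (c : F),
      (∑ i, Polynomial.C (l i) * (Polynomial.X + Polynomial.C (a i)) ^ k)
        = Polynomial.X + Polynomial.C c := by
  obtain ⟨e⟩ : Nonempty (Fin k ↪ F) := by
    rw [← Cardinal.lift_mk_le']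
    simpa using hcard.le
  set a : Fin k → F := ⇑e with haa
  obtain ⟨l, hl⟩ := my_vandermonde_solve a e.injective
    (fun m => if (m : ℕ) = k - 1 then (k : F)⁻¹ else 0)
  set q : F[X] := ∑ i, Polynomial.C (l i) * (Polynomial.X + Polynomial.C (a i)) ^ k with hq
  refine ⟨a, l, q.coeff 0, ?_⟩
  ext j
  have hcoeff : q.coeff j = (∑ i, l i * a i ^ (k - j)) * (k.choose j : F) := by
    rw [hq, Polynomial.finset_sum_coeff]
    rw [Finset.sum_mul]
    refine Finset.sum_congr rfl fun i _ => ?_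
    rw [Polynomial.coeff_C_mul, Polynomial.coeff_X_add_C_pow]
    ring
  match j with
  | 0 => rw [Polynomial.coeff_add, Polynomial.coeff_X_zero, Polynomial.coeff_C_zero, zero_add]
  | 1 =>
    have h1 : (1 : ℕ) < k := hk
    have : q.coeff 1 = 1 := by
      rw [hcoeff]
      have := hl ⟨k - 1, by omega⟩
      simp only [Fin.val_mk, if_pos rfl] at this
      rw [this, Nat.choose_one_right]
      exact inv_mul_cancel₀ hchar
    rw [this]; simp
  | (j + 2) =>
    have hrhs : (Polynomial.X + Polynomial.C (q.coeff 0)).coeff (j + 2) = 0 := by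
      simp [Polynomial.coeff_X]
    rw [hrhs, hcoeff]
    by_cases hjk : j + 2 ≤ k
    · have := hl ⟨k - (j + 2), by omega⟩
      simp only [Fin.val_mk] at this
      rw [if_neg (by omega)] at this
      rw [this, zero_mul]
    · rw [Nat.choose_eq_zero_of_lt (by omega)]
      simp

/-- If every element of `F` is a sum of `w` `k`-th powers, then every polynomial
of degree `d` is a sum of at most `k·w` `k`-th powers of degree `≤ kd`. -/
theorem decomposition_kw_terms (F : Type*) [Field F] (k w : ℕ) (hk : 2 ≤ k)
    (hw : 1 ≤ w) (hcard : (k : Cardinal) < Cardinal.mk F) (hchar : (k : F) ≠ 0)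
    (hW : ∀ a : F, ∃ b : Fin w → F, a = ∑ i, b i ^ k)
    (n d : ℕ) (hn : 1 ≤ n) (P : MvPolynomial (Fin n) F) (hP : P.totalDegree = d) :
    ∃ (s : ℕ) (Q : Fin s → MvPolynomial (Fin n) F),
      s ≤ k * w ∧ P = ∑ i, Q i ^ k ∧ ∀ i, (Q i ^ k).totalDegree ≤ k * d := by
  classical
  obtain ⟨a, l, c, hid⟩ := my_identity hk hcard hchar
  -- choose representations of the coefficients as sums of k-th powers
  choose b hb using fun i => hW (l i)
  -- the base polynomials
  set T : Fin k → MvPolynomial (Fin n) F :=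
    fun i => P + MvPolynomial.C (a i - c) with hT
  have key : ∑ i, MvPolynomial.C (l i) * (T i) ^ k = P := by
    have := congrArg (Polynomial.aeval (P - MvPolynomial.C c)) hid
    simp only [map_sum, map_mul, map_pow, map_add, Polynomial.aeval_X,
      Polynomial.aeval_C, MvPolynomial.algebraMap_eq, sub_add_cancel] at this
    rw [← this]
    refine Finset.sum_congr rfl fun i _ => ?_
    rw [hT]
    simp only [map_sub]
    ring
  set R : Fin k × Fin w → MvPolynomial (Fin n) F :=
    fun p => MvPolynomial.C (b p.1 p.2) * T p.1 with hR
  refine ⟨k * w, fun m => R (finProdFinEquiv.symm m), le_rfl, ?_, ?_⟩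
  · show P = ∑ m : Fin (k * w), R (finProdFinEquiv.symm m) ^ k
    have hre : ∑ m : Fin (k * w), R (finProdFinEquiv.symm m) ^ k
        = ∑ p : Fin k × Fin w, R p ^ k :=
      Fintype.sum_equiv finProdFinEquiv.symm _ _ (fun m => rfl)
    rw [hre, Fintype.sum_prod_type, ← key]
    refine Eq.symm (Finset.sum_congr rfl fun i _ => ?_)
    rw [hR]
    simp only
    have : (MvPolynomial.C (l i) : MvPolynomial (Fin n) F)
        = ∑ j : Fin w, (MvPolynomial.C (b i j) : MvPolynomial (Fin n) F) ^ k := by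
      rw [hb i]; rw [map_sum]; simp [map_pow]
    rw [this, Finset.sum_mul]
    refine Finset.sum_congr rfl fun j _ => ?_
    rw [mul_pow]
  · intro m
    set p := finProdFinEquiv.symm m
    have h1 : (T p.1).totalDegree ≤ d := by
      rw [hT]
      refine le_trans (MvPolynomial.totalDegree_add _ _) ?_
      rw [hP, MvPolynomial.totalDegree_C]
      simp
    have h2 : (R p).totalDegree ≤ d := by
      rw [hR]
      refine le_trans (MvPolynomial.totalDegree_mul _ _) ?_
      simpa [MvPolynomial.totalDegree_C] using h1
    calc (R p ^ k).totalDegree ≤ k * (R p).totalDegree :=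
          MvPolynomial.totalDegree_pow _ _
      _ ≤ k * d := Nat.mul_le_mul_left _ h2
end

section
/- Let F be a field with more than k distinct elements whose characteristic does not divide k. Every polynomial P ∈ F[x,y] of degree d admits a decomposition P = δ₁Q₁^k + ⋯ + δ_sQ_s^k with δᵢ ∈ F, Qᵢ ∈ F[x,y], deg Qᵢ^k ≤ d + 2(k-1)², and s ≤ k(d+1)(d+2)/2. -/
open MvPolynomial Finset

noncomputable def fe2 (a b : ℕ) : Fin 2 →₀ ℕ := Finsupp.single 0 a + Finsupp.single 1 b

@[simp] lemma fe2_apply0 (a b : ℕ) : fe2 a b 0 = a := by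
  simp [fe2, Finsupp.single_apply]

@[simp] lemma fe2_apply1 (a b : ℕ) : fe2 a b 1 = b := by
  simp [fe2, Finsupp.single_apply]

private lemma fin2_ext {μ ν : Fin 2 →₀ ℕ} (h0 : μ 0 = ν 0) (h1 : μ 1 = ν 1) : μ = ν := by
  ext a
  match a with
  | 0 => exact h0
  | 1 => exact h1

private lemma pow_key {F : Type*} [Field F] {k : ℕ} (hk : 2 ≤ k) (μ : Fin 2 →₀ ℕ) :
    (monomial (fe2 (μ 0 / k) (μ 1 / k)) (1:F))^(k-1)
      * monomial (fe2 (μ 0 / k + μ 0 % k) (μ 1 / k + μ 1 % k)) 1 = monomial μ 1 := by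
  have key : ∀ n : ℕ, (k - 1) * (n / k) + (n / k + n % k) = n := by
    intro n
    have h := Nat.div_add_mod n k
    have h2 : (k-1) * (n / k) = k * (n / k) - (n / k) := by rw [Nat.sub_one_mul]
    have h3 : n / k ≤ k * (n / k) := Nat.le_mul_of_pos_left _ (by omega)
    omega
  have hexp : (k - 1) • fe2 (μ 0 / k) (μ 1 / k)
      + fe2 (μ 0 / k + μ 0 % k) (μ 1 / k + μ 1 % k) = μ := by
    refine fin2_ext ?_ ?_
    · rw [Finsupp.add_apply, Finsupp.smul_apply, smul_eq_mul, fe2_apply0, fe2_apply0]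
      exact key (μ 0)
    · rw [Finsupp.add_apply, Finsupp.smul_apply, smul_eq_mul, fe2_apply1, fe2_apply1]
      exact key (μ 1)
  rw [monomial_pow, one_pow, monomial_mul, one_mul, hexp]

private lemma fin2_pair_inj : Function.Injective (fun μ : Fin 2 →₀ ℕ => (μ 0, μ 1)) := by
  intro μ ν h
  simp only [Prod.mk.injEq] at h
  ext a
  match a with
  | 0 => exact h.1
  | 1 => exact h.2

private lemma sum_fin2 (μ : Fin 2 →₀ ℕ) : (μ.sum fun _ e => e) = μ 0 + μ 1 := by
  rw [Finsupp.sum_fintype _ _ (fun _ => rfl)]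
  exact Fin.sum_univ_two μ

private lemma card_bound {d : ℕ} (S : Finset (Fin 2 →₀ ℕ))
    (hS : ∀ μ ∈ S, μ 0 + μ 1 ≤ d) : 2 * S.card ≤ (d+1) * (d+2) := by
  have h1 : S.card ≤ ((range (d+1)).biUnion fun m => Finset.HasAntidiagonal.antidiagonal m).card := by
    apply Finset.card_le_card_of_injOn (fun μ => (μ 0, μ 1))
    · intro μ hμ
      simp only [Finset.mem_coe, Finset.mem_biUnion, Finset.mem_range, Finset.HasAntidiagonal.mem_antidiagonal]
      exact ⟨μ 0 + μ 1, by have := hS μ hμ; omega, rfl⟩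
    · exact fun a _ b _ h => fin2_pair_inj h
  have h2 : ((range (d+1)).biUnion fun m => Finset.HasAntidiagonal.antidiagonal m).card
      = ∑ m ∈ range (d+1), (m+1) := by
    rw [Finset.card_biUnion]
    · exact Finset.sum_congr rfl fun m _ => Finset.Nat.card_antidiagonal m
    · intro x _ y _ hxy
      rw [Function.onFun, Finset.disjoint_left]
      intro p hp hp'
      rw [Finset.HasAntidiagonal.mem_antidiagonal] at hp hp'
      omega
  have h3 : (∑ m ∈ range (d+1), (m+1)) * 2 = (d+1)*(d+2) := by
    have : (∑ m ∈ range (d+1), (m+1)) = ∑ m ∈ range (d+2), m := by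
      rw [Finset.sum_range_succ' (fun m => m) (d+1)]
      simp
    rw [this, Finset.sum_range_id_mul_two]
    simp [Nat.mul_comm]
  omega

private lemma exists_coeffs {F : Type*} [Field F] (k : ℕ) (hk : 1 ≤ k)
    (hcard : (k : Cardinal) < Cardinal.mk F) :
    ∃ c v : Fin k → F, ∀ m : ℕ, 1 ≤ m → m ≤ k →
      (∑ i, c i * v i ^ m) = if m = 1 then 1 else 0 := by
  classical
  have h1 : ((k+1 : ℕ) : Cardinal) ≤ Cardinal.mk F := by
    have h := Order.succ_le_of_lt hcard
    rwa [← Cardinal.nat_succ] at h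
  obtain ⟨t₀, hcard₀⟩ := Cardinal.exists_finset_le_card F (k+1) h1
  have hle : k ≤ (t₀.erase 0).card := by
    have := Finset.pred_card_le_card_erase (s := t₀) (a := (0:F))
    omega
  obtain ⟨u, hu_sub, hu_card⟩ := Finset.exists_subset_card_eq hle
  set e := Finset.equivFinOfCardEq hu_card with he
  set v : Fin k → F := fun i => ((e.symm i : u) : F) with hv
  have hv_inj : Function.Injective v := by
    intro i j hij
    have := Subtype.coe_injective hij
    exact e.symm.injective this
  have hv0 : ∀ i, v i ≠ 0 := by
    intro i h0
    have hm : v i ∈ t₀.erase 0 := hu_sub (e.symm i).2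
    rw [h0] at hm
    exact (Finset.notMem_erase 0 t₀) hm
  set z : Fin k := ⟨0, hk⟩ with hz
  set W : Matrix (Fin k) (Fin k) F := Matrix.of fun i j => v i ^ ((j : ℕ) + 1) with hWdef
  have hW : W = Matrix.diagonal v * Matrix.vandermonde v := by
    ext i j
    rw [Matrix.diagonal_mul]
    simp [hWdef, Matrix.vandermonde, pow_succ']
  have hdet : IsUnit W.det := by
    rw [hW, Matrix.det_mul, Matrix.det_diagonal, Matrix.det_vandermonde]
    refine (mul_ne_zero ?_ ?_).isUnit
    · exact Finset.prod_ne_zero_iff.2 fun i _ => hv0 i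
    · refine Finset.prod_ne_zero_iff.2 fun i _ => ?_
      refine Finset.prod_ne_zero_iff.2 fun j hj => ?_
      rw [Finset.mem_Ioi] at hj
      exact sub_ne_zero.2 fun h => absurd (hv_inj h) (ne_of_gt hj)
  set c : Fin k → F := Matrix.vecMul (Pi.single z 1) W⁻¹ with hc
  have hmul : Matrix.vecMul c W = Pi.single z 1 := by
    rw [hc, Matrix.vecMul_vecMul, Matrix.nonsing_inv_mul _ hdet, Matrix.vecMul_one]
  refine ⟨c, v, fun m hm1 hmk => ?_⟩
  have hj : m - 1 < k := by omega
  set j : Fin k := ⟨m - 1, hj⟩ with hjdef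
  have key : (∑ i, c i * v i ^ m) = Matrix.vecMul c W j := by
    rw [Matrix.vecMul]
    simp only [dotProduct, hWdef, Matrix.of_apply]
    refine Finset.sum_congr rfl fun i _ => ?_
    congr 2
    have hjv : ((⟨m - 1, hj⟩ : Fin k) : ℕ) = m - 1 := rfl
    have hjv' : (j : ℕ) = m - 1 := rfl
    omega
  rw [key, hmul, Pi.single_apply]
  have hiff : (j = z) ↔ (m = 1) := by
    rw [Fin.ext_iff]
    simp [hjdef, hz]
    omega
  simp only [hiff]

private lemma magic_sum {F : Type*} [Field F] {k : ℕ} (hk : 2 ≤ k) (c v : Fin k → F)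
    (hcv : ∀ m : ℕ, 1 ≤ m → m ≤ k → (∑ i, c i * v i ^ m) = if m = 1 then 1 else 0)
    (A B : MvPolynomial (Fin 2) F) :
    ∑ i, C (c i) * (A + C (v i) * B) ^ k
      = C (∑ i, c i) * A ^ k + C (k : F) * (A ^ (k-1) * B) := by
  have step1 : ∑ i, C (c i) * (A + C (v i) * B) ^ k
      = ∑ j ∈ range (k+1), C (∑ i, c i * v i ^ (k - j)) *
          (A ^ j * B ^ (k-j) * (k.choose j : MvPolynomial (Fin 2) F)) := by
    have expand : ∀ i : Fin k, C (c i) * (A + C (v i) * B)^k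
        = ∑ j ∈ range (k+1), C (c i * v i ^ (k - j)) *
            (A ^ j * B ^ (k - j) * (k.choose j : MvPolynomial (Fin 2) F)) := by
      intro i
      rw [add_pow, Finset.mul_sum]
      refine Finset.sum_congr rfl fun j _ => ?_
      rw [mul_pow, ← C_pow, C_mul]
      ring
    simp_rw [expand]
    rw [Finset.sum_comm]
    refine Finset.sum_congr rfl fun j _ => ?_
    rw [← Finset.sum_mul, ← map_sum]
  rw [step1]
  have hk1 : k = (k - 1) + 1 := by omega
  rw [Finset.sum_range_succ]
  have hr : range k = range ((k-1)+1) := by rw [← hk1]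
  rw [hr, Finset.sum_range_succ]
  have hzero : ∑ j ∈ range (k - 1), C (∑ i, c i * v i ^ (k - j)) *
      (A ^ j * B ^ (k-j) * (k.choose j : MvPolynomial (Fin 2) F)) = 0 := by
    refine Finset.sum_eq_zero fun j hj => ?_
    rw [Finset.mem_range] at hj
    have h1 : 1 ≤ k - j := by omega
    have h2 : k - j ≤ k := by omega
    have h3 : ¬ (k - j = 1) := by omega
    rw [hcv (k - j) h1 h2, if_neg h3, map_zero, zero_mul]
  rw [hzero, zero_add]
  have e1 : k - (k - 1) = 1 := by omega
  have e2 : k - k = 0 := by omega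
  rw [e1, e2]
  rw [hcv 1 le_rfl (by omega), if_pos rfl, map_one, one_mul]
  have e3 : ∑ i, c i * v i ^ 0 = ∑ i, c i := by simp
  rw [e3]
  have e4 : k.choose (k-1) = k := by
    conv_lhs => rw [hk1]
    simp only [Nat.add_sub_cancel, Nat.choose_succ_self_right]
    omega
  rw [e4, Nat.choose_self]
  have hnc : ((k : ℕ) : MvPolynomial (Fin 2) F) = C (k : F) :=
    (map_natCast (C : F →+* MvPolynomial (Fin 2) F) k).symm
  rw [hnc]
  ring

private lemma monomial_decomp {F : Type*} [Field F] {k : ℕ} (hk : 2 ≤ k) (hchar : (k:F) ≠ 0)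
    (c v : Fin k → F)
    (hcv : ∀ m : ℕ, 1 ≤ m → m ≤ k → (∑ i, c i * v i ^ m) = if m = 1 then 1 else 0)
    (μ : Fin 2 →₀ ℕ) (a : F) :
    ∑ i, C (a / k * c i) * (monomial (fe2 (μ 0 / k) (μ 1 / k)) 1
        + C (v i) * monomial (fe2 (μ 0 / k + μ 0 % k) (μ 1 / k + μ 1 % k)) 1) ^ k
      = C (a / k * ∑ i, c i) * monomial (k • fe2 (μ 0 / k) (μ 1 / k)) 1 + monomial μ a := by
  set A : MvPolynomial (Fin 2) F := monomial (fe2 (μ 0 / k) (μ 1 / k)) 1 with hA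
  set B : MvPolynomial (Fin 2) F :=
    monomial (fe2 (μ 0 / k + μ 0 % k) (μ 1 / k + μ 1 % k)) 1 with hB
  have hm := magic_sum hk c v hcv A B
  have step : ∑ i, C (a / k * c i) * (A + C (v i) * B) ^ k
      = C (a / k) * ∑ i, C (c i) * (A + C (v i) * B) ^ k := by
    rw [Finset.mul_sum]
    exact Finset.sum_congr rfl fun i _ => by rw [C_mul, mul_assoc]
  rw [step, hm, mul_add]
  congr 1
  · rw [← mul_assoc, ← C_mul, hA, monomial_pow, one_pow]
  · rw [← mul_assoc, ← C_mul, div_mul_cancel₀ a hchar, pow_key hk μ, C_mul_monomial, mul_one]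

private lemma arith_deg {k q0 q1 r0 r1 m0 m1 d : ℕ} (hk : 2 ≤ k)
    (h0 : k * q0 + r0 = m0) (h1 : k * q1 + r1 = m1) (hr0 : r0 < k) (hr1 : r1 < k)
    (hd : m0 + m1 ≤ d) : k * (q0 + q1 + (r0 + r1)) ≤ d + 2 * (k-1)^2 := by
  obtain ⟨k', rfl⟩ : ∃ k', k = k' + 1 := ⟨k-1, by omega⟩
  simp only [Nat.add_sub_cancel]
  have a0 : k' * r0 ≤ k' * k' := Nat.mul_le_mul_left _ (by omega)
  have a1 : k' * r1 ≤ k' * k' := Nat.mul_le_mul_left _ (by omega)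
  nlinarith [h0, h1, a0, a1, hd]

private lemma arith_count {k a b d : ℕ} (hk : 2 ≤ k) (h : 2*(a+b) ≤ (d+1)*(d+2)) :
    2*(a*k+b) ≤ k*(d+1)*(d+2) := by nlinarith

private lemma mem_support_monomial {F : Type*} [Field F] {ν μ : Fin 2 →₀ ℕ} {a : F}
    (h : ν ∈ (monomial μ a).support) : ν = μ := by
  classical
  rw [MvPolynomial.support_monomial] at h
  split_ifs at h
  · exact absurd h (Finset.notMem_empty _)
  · exact Finset.mem_singleton.mp h

set_option maxHeartbeats 1000000 in
/-- Every `P ∈ F[x,y]` of degree `d` is a combination `δ₁Q₁^k + ⋯ + δ_sQ_s^k`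
with `deg Qᵢ^k ≤ d + 2(k-1)²` and `s ≤ k(d+1)(d+2)/2`. -/
theorem decomposition_low_degree_scaled (F : Type*) [Field F] (k : ℕ) (hk : 2 ≤ k)
    (hcard : (k : Cardinal) < Cardinal.mk F) (hchar : (k : F) ≠ 0)
    (d : ℕ) (P : MvPolynomial (Fin 2) F) (hP : P.totalDegree = d) :
    ∃ (s : ℕ) (δ : Fin s → F) (Q : Fin s → MvPolynomial (Fin 2) F),
      2 * s ≤ k * (d + 1) * (d + 2) ∧
      P = ∑ i, MvPolynomial.C (δ i) * Q i ^ k ∧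
      ∀ i, (Q i ^ k).totalDegree ≤ d + 2 * (k - 1) ^ 2 := by
  classical
  obtain ⟨c, v, hcv⟩ := exists_coeffs k (by omega) hcard
  set s₁ : Finset (Fin 2 →₀ ℕ) := P.support.filter (fun μ => ¬ (k ∣ μ 0 ∧ k ∣ μ 1)) with hs₁def
  set s₀ : Finset (Fin 2 →₀ ℕ) := P.support.filter (fun μ => (k ∣ μ 0 ∧ k ∣ μ 1)) with hs₀def
  set QA : (Fin 2 →₀ ℕ) → MvPolynomial (Fin 2) F :=
    fun μ => monomial (fe2 (μ 0 / k) (μ 1 / k)) 1 with hQAdef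
  set QB : (Fin 2 →₀ ℕ) → MvPolynomial (Fin 2) F :=
    fun μ => monomial (fe2 (μ 0 / k + μ 0 % k) (μ 1 / k + μ 1 % k)) 1 with hQBdef
  set G : (Fin 2 →₀ ℕ) → MvPolynomial (Fin 2) F :=
    fun μ => ∑ i, C (P.coeff μ / k * c i) * (QA μ + C (v i) * QB μ)^k with hGdef
  set R : MvPolynomial (Fin 2) F := P - ∑ μ ∈ s₁, G μ with hRdef
  have hG : ∀ μ, G μ = C (P.coeff μ / k * ∑ i, c i) * monomial (k • fe2 (μ 0 / k) (μ 1 / k)) 1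
      + monomial μ (P.coeff μ) := fun μ => monomial_decomp hk hchar c v hcv μ _
  have hdegP : ∀ μ ∈ P.support, μ 0 + μ 1 ≤ d := by
    intro μ h
    have h2 := MvPolynomial.le_totalDegree h
    rw [sum_fin2, hP] at h2
    exact h2
  have hsplit : (∑ μ ∈ s₀, monomial μ (P.coeff μ)) + ∑ μ ∈ s₁, monomial μ (P.coeff μ) = P := by
    rw [hs₀def, hs₁def, Finset.sum_filter_add_sum_filter_not]
    exact P.as_sum.symm
  have hRform : R = (∑ μ ∈ s₀, monomial μ (P.coeff μ))
      - ∑ μ ∈ s₁, C (P.coeff μ / k * ∑ i, c i) * monomial (k • fe2 (μ 0 / k) (μ 1 / k)) 1 := by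
    rw [hRdef]
    rw [Finset.sum_congr rfl (fun μ _ => hG μ), Finset.sum_add_distrib]
    linear_combination -hsplit
  have hRsupp : ∀ ν ∈ R.support, ((k ∣ ν 0 ∧ k ∣ ν 1) ∧ ν 0 + ν 1 ≤ d) := by
    intro ν hν
    have hν' : ν ∈ ((∑ μ ∈ s₀, monomial μ (P.coeff μ))
        - ∑ μ ∈ s₁, C (P.coeff μ / k * ∑ i, c i)
          * monomial (k • fe2 (μ 0 / k) (μ 1 / k)) 1).support := by
      rw [← hRform]; exact hν
    rcases Finset.mem_union.mp (MvPolynomial.support_sub _ _ _ hν') with h | h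
    · obtain ⟨μ, hμ, hν2⟩ := Finset.mem_biUnion.mp (MvPolynomial.support_sum h)
      have heq2 := mem_support_monomial hν2
      subst heq2
      rw [hs₀def, Finset.mem_filter] at hμ
      exact ⟨hμ.2, hdegP _ hμ.1⟩
    · obtain ⟨μ, hμ, hν2⟩ := Finset.mem_biUnion.mp (MvPolynomial.support_sum h)
      rw [C_mul_monomial, mul_one] at hν2
      have heq2 := mem_support_monomial hν2
      subst heq2
      have hμP : μ ∈ P.support := (Finset.mem_filter.mp hμ).1
      have e0 : (k • fe2 (μ 0 / k) (μ 1 / k)) 0 = k * (μ 0 / k) := by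
        rw [Finsupp.smul_apply, smul_eq_mul, fe2_apply0]
      have e1 : (k • fe2 (μ 0 / k) (μ 1 / k)) 1 = k * (μ 1 / k) := by
        rw [Finsupp.smul_apply, smul_eq_mul, fe2_apply1]
      refine ⟨⟨e0 ▸ Dvd.intro _ rfl, e1 ▸ Dvd.intro _ rfl⟩, ?_⟩
      rw [e0, e1]
      have := hdegP _ hμP
      have d0 : k * (μ 0 / k) ≤ μ 0 := Nat.mul_div_le _ _
      have d1 : k * (μ 1 / k) ≤ μ 1 := Nat.mul_div_le _ _
      omega
  have hRdecomp : R = ∑ ν ∈ R.support, C (R.coeff ν) * (QA ν)^k := by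
    conv_lhs => rw [R.as_sum]
    refine Finset.sum_congr rfl fun ν hν => ?_
    obtain ⟨⟨h0, h1⟩, _⟩ := hRsupp ν hν
    have hexp : k • fe2 (ν 0 / k) (ν 1 / k) = ν := by
      refine fin2_ext ?_ ?_
      · rw [Finsupp.smul_apply, smul_eq_mul, fe2_apply0]
        exact Nat.mul_div_cancel' h0
      · rw [Finsupp.smul_apply, smul_eq_mul, fe2_apply1]
        exact Nat.mul_div_cancel' h1
    simp only [hQAdef]
    rw [monomial_pow, one_pow, C_mul_monomial, mul_one, hexp]
  have hPsum : P = (∑ μ ∈ s₁, G μ) + R := by rw [hRdef]; ring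
  -- index type
  set δ : (↥s₁ × Fin k) ⊕ ↥R.support → F := Sum.elim (fun x => P.coeff ↑x.1 / k * c x.2) (fun ν => R.coeff ↑ν) with hδdef
  set Q : (↥s₁ × Fin k) ⊕ ↥R.support → MvPolynomial (Fin 2) F :=
    Sum.elim (fun x => QA ↑x.1 + C (v x.2) * QB ↑x.1) (fun ν => QA ↑ν) with hQdef
  set e := Fintype.equivFin ((↥s₁ × Fin k) ⊕ ↥R.support) with he
  refine ⟨Fintype.card ((↥s₁ × Fin k) ⊕ ↥R.support), fun i => δ (e.symm i),
    fun i => Q (e.symm i), ?_, ?_, ?_⟩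
  · have hcardι : Fintype.card ((↥s₁ × Fin k) ⊕ ↥R.support)
        = s₁.card * k + R.support.card := by
      simp [Fintype.card_sum, Fintype.card_prod, Fintype.card_coe]
    have hdisj : Disjoint s₁ R.support := by
      rw [Finset.disjoint_left]
      intro μ h1 h2
      exact (Finset.mem_filter.mp h1).2 (hRsupp μ h2).1
    have hunion : ∀ μ ∈ s₁ ∪ R.support, μ 0 + μ 1 ≤ d := by
      intro μ h
      rcases Finset.mem_union.mp h with h | h
      · exact hdegP _ (Finset.mem_filter.mp h).1
      · exact (hRsupp μ h).2
    have hcb := card_bound (s₁ ∪ R.support) hunion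
    rw [Finset.card_union_of_disjoint hdisj] at hcb
    rw [hcardι]
    exact arith_count hk hcb
  · rw [Equiv.sum_comp e.symm (fun i => C (δ i) * Q i ^ k)]
    rw [Fintype.sum_sum_type]
    simp only [hδdef, hQdef, Sum.elim_inl, Sum.elim_inr]
    have h₁ : (∑ x : ↥s₁ × Fin k, C (P.coeff ↑x.1 / k * c x.2)
        * (QA ↑x.1 + C (v x.2) * QB ↑x.1) ^ k) = ∑ μ ∈ s₁, G μ := by
      rw [Fintype.sum_prod_type, ← Finset.sum_coe_sort s₁ (fun μ => G μ)]
    have h₂ : (∑ ν : ↥R.support, C (R.coeff ↑ν) * (QA ↑ν) ^ k) = R := by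
      rw [Finset.sum_coe_sort R.support (fun ν => C (R.coeff ν) * (QA ν)^k)]
      exact hRdecomp.symm
    rw [h₁, h₂]
    exact hPsum
  · intro i
    rcases hcase : e.symm i with x | ν
    · -- left case
      obtain ⟨⟨μ, hμ⟩, j⟩ := x
      simp only [hQdef]
      rw [hcase]
      simp only [Sum.elim_inl]
      have hμP : μ ∈ P.support := (Finset.mem_filter.mp hμ).1
      have hdQ : (QA μ + C (v j) * QB μ).totalDegree
          ≤ μ 0 / k + μ 1 / k + (μ 0 % k + μ 1 % k) := by
        refine le_trans (MvPolynomial.totalDegree_add _ _) ?_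
        rw [sup_le_iff]
        constructor
        · simp only [hQAdef]
          rw [MvPolynomial.totalDegree_monomial _ (one_ne_zero), sum_fin2, fe2_apply0, fe2_apply1]
          omega
        · refine le_trans (MvPolynomial.totalDegree_mul _ _) ?_
          rw [MvPolynomial.totalDegree_C]
          simp only [hQBdef]
          rw [MvPolynomial.totalDegree_monomial _ (one_ne_zero), sum_fin2, fe2_apply0, fe2_apply1]
          omega
      refine le_trans (MvPolynomial.totalDegree_pow _ _) ?_
      have hb := Nat.mul_le_mul_left k hdQ
      refine le_trans hb ?_
      have h0 := Nat.div_add_mod (μ 0) k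
      have h1 := Nat.div_add_mod (μ 1) k
      have hr0 : μ 0 % k < k := Nat.mod_lt _ (by omega)
      have hr1 : μ 1 % k < k := Nat.mod_lt _ (by omega)
      exact arith_deg hk h0 h1 hr0 hr1 (hdegP _ hμP)
    · -- right case
      simp only [hQdef]
      rw [hcase]
      simp only [Sum.elim_inr]
      obtain ⟨⟨hd0, hd1⟩, hdd⟩ := hRsupp ↑ν ν.2
      have hexp : k • fe2 ((↑ν : Fin 2 →₀ ℕ) 0 / k) ((↑ν : Fin 2 →₀ ℕ) 1 / k)
          = (↑ν : Fin 2 →₀ ℕ) := by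
        refine fin2_ext ?_ ?_
        · rw [Finsupp.smul_apply, smul_eq_mul, fe2_apply0]
          exact Nat.mul_div_cancel' hd0
        · rw [Finsupp.smul_apply, smul_eq_mul, fe2_apply1]
          exact Nat.mul_div_cancel' hd1
      have hQν : ((QA ↑ν : MvPolynomial (Fin 2) F))^k = monomial (↑ν : Fin 2 →₀ ℕ) 1 := by
        simp only [hQAdef]
        rw [monomial_pow, one_pow, hexp]
      rw [hQν, MvPolynomial.totalDegree_monomial _ (one_ne_zero), sum_fin2]
      omega
end

section
/- Let F be a field with more than k elements, whose characteristic does not divide k, in which every element is a sum of w k-th powers. Every P ∈ F[x,y] of degree d admits a decomposition P = Q₁^k + ⋯ + Q_s^k with Qᵢ ∈ F[x,y], deg Qᵢ^k ≤ d + 2(k-1)², and s ≤ k·w·(d+1)(d+2)/2. -/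
universe u

lemma aux_exists_e (F : Type u) [Field F] (k : ℕ) (hk : 2 ≤ k)
    (hcard : (k : Cardinal.{u}) < Cardinal.mk F) (hchar : (k : F) ≠ 0) :
    ∃ e : Fin k → F, Function.Injective e ∧ ∑ i, e i = 0 := by
  have h1 : (Cardinal.mk (ULift.{u} (Fin k))) ≤ Cardinal.mk F := by
    simpa using hcard.le
  obtain ⟨f⟩ := Cardinal.le_def _ _ |>.mp h1
  set g : Fin k → F := fun i => f (ULift.up i) with hg
  have hginj : Function.Injective g := fun i j hij => by
    have := f.injective hij; exact congrArg ULift.down this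
  set σ : F := ∑ i, g i with hσ
  refine ⟨fun i => g i - σ / k, ?_, ?_⟩
  · intro i j hij
    exact hginj (by simpa using sub_left_injective hij)
  · rw [Finset.sum_sub_distrib]
    simp only [Finset.sum_const, Finset.card_univ, Fintype.card_fin, ← hσ]
    rw [nsmul_eq_mul]
    field_simp
    simp


open Polynomial Matrix in
lemma aux_exists_c {F : Type*} [Field F] (k : ℕ) (hk : 2 ≤ k) (hchar : (k : F) ≠ 0)
    (e : Fin k → F) (he : Function.Injective e) (hesum : ∑ i, e i = 0) :
    ∃ c : Fin k → F, ∀ j : ℕ, j ≤ k →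
      ∑ i, c i * e i ^ j = if j = k - 1 then (k : F)⁻¹ else 0 := by
  classical
  set M : Matrix (Fin k) (Fin k) F := (Matrix.vandermonde e)ᵀ with hM
  have hdet : M.det ≠ 0 := by
    rw [hM, Matrix.det_transpose, Matrix.det_vandermonde]
    refine Finset.prod_ne_zero_iff.mpr fun i _ => Finset.prod_ne_zero_iff.mpr fun j hj => ?_
    have : i < j := Finset.mem_Ioi.mp hj
    exact sub_ne_zero.mpr (fun h => absurd (he h) this.ne')
  set t : Fin k → F := fun j => if (j : ℕ) = k - 1 then (k : F)⁻¹ else 0 with ht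
  set c : Fin k → F := M⁻¹.mulVec t with hc
  have hMc : M.mulVec c = t := by
    rw [hc, Matrix.mulVec_mulVec, Matrix.mul_nonsing_inv _ (isUnit_iff_ne_zero.mpr hdet), Matrix.one_mulVec]
  have hlt : ∀ j : Fin k, ∑ i, c i * e i ^ (j : ℕ) = if (j : ℕ) = k - 1 then (k : F)⁻¹ else 0 := by
    intro j
    have := congrFun hMc j
    rw [Matrix.mulVec, dotProduct] at this
    simpa [hM, Matrix.vandermonde, mul_comm] using this
  refine ⟨c, fun j hj => ?_⟩
  rcases lt_or_eq_of_le hj with hjk | hjeq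
  · exact hlt ⟨j, hjk⟩
  rw [hjeq]
  -- case j = k : Newton trick
  have hne : ¬ (k = k - 1) := by omega
  rw [if_neg hne]
  set p : F[X] := ∏ i, (X - C (e i)) with hp
  have hmon : p.Monic := monic_prod_of_monic _ _ fun i _ => monic_X_sub_C _
  have hdeg : p.natDegree = k := by
    rw [hp, natDegree_prod _ _ fun i _ => X_sub_C_ne_zero _]
    simp
  have hnext : p.nextCoeff = 0 := by
    rw [hp, prod_X_sub_C_nextCoeff, hesum, neg_zero]
  have hcoeff : p.coeff (k - 1) = 0 := by
    have := hnext
    rwa [nextCoeff, hdeg, if_neg (by omega)] at this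
  set q : F[X] := X ^ k - p with hq
  have hqc : ∀ m : ℕ, k - 1 ≤ m → q.coeff m = 0 := by
    intro m hm
    rcases lt_trichotomy m k with hmk | hmk | hmk
    · have hm' : m = k - 1 := by omega
      subst hm'
      simp [hq, coeff_X_pow, if_neg (show ¬ (k-1 = k) by omega), hcoeff]
    · subst hmk
      have hlead : p.coeff m = 1 := by
        have := hmon.coeff_natDegree
        rwa [hdeg] at this
      simp [hq, coeff_X_pow, hlead]
    · have h1 : p.coeff m = 0 := coeff_eq_zero_of_natDegree_lt (by omega)
      simp [hq, coeff_X_pow, if_neg (show ¬ (m = k) by omega), h1]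
  have hqdeg : q.natDegree < k + 1 := by
    have h2 : q.natDegree ≤ max ((X ^ k : F[X]).natDegree) p.natDegree := natDegree_sub_le _ _
    simp only [natDegree_X_pow, hdeg, max_self] at h2
    omega
  have hek : ∀ i, e i ^ k = q.eval (e i) := by
    intro i
    have hroot : p.eval (e i) = 0 := by
      rw [hp, eval_prod]
      exact Finset.prod_eq_zero (Finset.mem_univ i) (by simp)
    simp [hq, hroot]
  calc ∑ i, c i * e i ^ k = ∑ i, c i * ∑ m ∈ Finset.range (k+1), q.coeff m * e i ^ m := by
        refine Finset.sum_congr rfl fun i _ => ?_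
        rw [hek i, eval_eq_sum_range' hqdeg]
    _ = ∑ i, ∑ m ∈ Finset.range (k+1), q.coeff m * (c i * e i ^ m) := by
        refine Finset.sum_congr rfl fun i _ => ?_
        rw [Finset.mul_sum]
        exact Finset.sum_congr rfl fun m _ => by ring
    _ = ∑ m ∈ Finset.range (k+1), ∑ i, q.coeff m * (c i * e i ^ m) := Finset.sum_comm
    _ = ∑ m ∈ Finset.range (k+1), q.coeff m * ∑ i, c i * e i ^ m := by
        exact Finset.sum_congr rfl fun m _ => (Finset.mul_sum _ _ _).symm
    _ = 0 := by
        refine Finset.sum_eq_zero fun m hm => ?_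
        rcases le_or_gt (k-1) m with h | h
        · rw [hqc m h, zero_mul]
        · rw [hlt ⟨m, by omega⟩]
          simp [if_neg (by omega : ¬ m = k - 1)]


open MvPolynomial in
lemma aux_waring {F : Type*} [Field F] (k : ℕ) (hk : 2 ≤ k) (hchar : (k : F) ≠ 0)
    (e c : Fin k → F)
    (hc : ∀ j : ℕ, j ≤ k → ∑ i, c i * e i ^ j = if j = k - 1 then (k : F)⁻¹ else 0)
    (u v : MvPolynomial (Fin 2) F) :
    u * v ^ (k - 1) = ∑ i, C (c i) * (u + C (e i) * v) ^ k := by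
  have expand : ∀ i : Fin k, (u + C (e i) * v) ^ k
      = ∑ j ∈ Finset.range (k+1), u ^ j * (C (e i) * v) ^ (k - j) * (k.choose j : MvPolynomial (Fin 2) F) :=
    fun i => add_pow u (C (e i) * v) k
  symm
  calc ∑ i, C (c i) * (u + C (e i) * v) ^ k
      = ∑ i, ∑ j ∈ Finset.range (k+1),
          (C (c i) * C (e i) ^ (k - j)) * (u ^ j * v ^ (k - j) * (k.choose j : MvPolynomial (Fin 2) F)) := by
        refine Finset.sum_congr rfl fun i _ => ?_
        rw [expand i, Finset.mul_sum]
        exact Finset.sum_congr rfl fun j _ => by ring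
    _ = ∑ j ∈ Finset.range (k+1), ∑ i : Fin k,
          (C (c i) * C (e i) ^ (k - j)) * (u ^ j * v ^ (k - j) * (k.choose j : MvPolynomial (Fin 2) F)) :=
        Finset.sum_comm
    _ = ∑ j ∈ Finset.range (k+1),
          C (∑ i, c i * e i ^ (k - j)) * (u ^ j * v ^ (k - j) * (k.choose j : MvPolynomial (Fin 2) F)) := by
        refine Finset.sum_congr rfl fun j _ => ?_
        rw [← Finset.sum_mul]
        congr 1
        rw [map_sum]
        exact Finset.sum_congr rfl fun i _ => by rw [C_mul, C_pow]
    _ = u * v ^ (k - 1) := ?_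
  rw [Finset.sum_eq_single_of_mem 1 (Finset.mem_range.mpr (by omega))]
  · rw [hc (k - 1) (by omega), if_pos rfl, Nat.choose_one_right]
    have : ((k : ℕ) : MvPolynomial (Fin 2) F) = C ((k : F)) := by
      simp
    rw [this, pow_one]
    calc C (k : F)⁻¹ * (u * v ^ (k - 1) * C (k : F))
        = (C (k : F)⁻¹ * C (k : F)) * (u * v ^ (k - 1)) := by ring
      _ = u * v ^ (k - 1) := by rw [← C_mul, inv_mul_cancel₀ hchar, C_1, one_mul]
  · intro j hj hj1
    have hjk : j ≤ k := by simpa using Nat.lt_succ_iff.mp (Finset.mem_range.mp hj)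
    rw [hc (k - j) (by omega), if_neg (by omega), C_0, zero_mul]

open MvPolynomial in
lemma aux_monomial {F : Type*} [Field F] (k w : ℕ) (hk : 2 ≤ k) (hchar : (k : F) ≠ 0)
    (hW : ∀ a : F, ∃ b : Fin w → F, a = ∑ i, b i ^ k)
    (e c : Fin k → F)
    (hc : ∀ j : ℕ, j ≤ k → ∑ i, c i * e i ^ j = if j = k - 1 then (k : F)⁻¹ else 0)
    (d : ℕ) (co : F) (a b : ℕ) (hab : a + b ≤ d) :
    ∃ Q : Fin k → Fin w → MvPolynomial (Fin 2) F,
      (C co * X 0 ^ a * X 1 ^ b : MvPolynomial (Fin 2) F) = ∑ i, ∑ j, (Q i j) ^ k ∧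
      ∀ i j, ((Q i j) ^ k).totalDegree ≤ d + 2 * (k - 1) ^ 2 := by
  classical
  set α := a / k with hα
  set γ := a / k + a % k with hγ
  set β := b / k with hβ
  set δ := b / k + b % k with hδ
  set A : MvPolynomial (Fin 2) F := C co * X 0 ^ γ * X 1 ^ δ with hA
  set B : MvPolynomial (Fin 2) F := X 0 ^ α * X 1 ^ β with hB
  -- exponent identities
  have hexp : ∀ n : ℕ, (n / k + n % k) + (n / k) * (k - 1) = n := by
    intro n
    have h1 : 1 + (k - 1) = k := by omega
    calc (n / k + n % k) + (n / k) * (k - 1)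
        = (n / k) * (1 + (k - 1)) + n % k := by ring
      _ = (n / k) * k + n % k := by rw [h1]
      _ = n := Nat.div_add_mod' n k
  have hAB : A * B ^ (k - 1) = C co * X 0 ^ a * X 1 ^ b := by
    rw [hA, hB, mul_pow, ← pow_mul, ← pow_mul]
    calc (C co * X 0 ^ γ * X 1 ^ δ * (X 0 ^ (α * (k-1)) * X 1 ^ (β * (k-1))) : MvPolynomial (Fin 2) F)
        = C co * (X 0 ^ γ * X 0 ^ (α * (k-1))) * (X 1 ^ δ * X 1 ^ (β * (k-1))) := by ring
      _ = C co * X 0 ^ (γ + α * (k-1)) * X 1 ^ (δ + β * (k-1)) := by rw [pow_add, pow_add]; ring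
      _ = C co * X 0 ^ a * X 1 ^ b := by rw [hγ, hα, hexp a, hδ, hβ, hexp b]
  -- Waring decomposition
  have hwar := aux_waring k hk hchar e c hc A B
  rw [hAB] at hwar
  -- coefficients c i as sums of k-th powers
  choose bb hbb using fun i => hW (c i)
  refine ⟨fun i j => C (bb i j) * (A + C (e i) * B), ?_, ?_⟩
  · rw [hwar]
    refine Finset.sum_congr rfl fun i _ => ?_
    rw [hbb i, map_sum, Finset.sum_mul]
    refine Finset.sum_congr rfl fun j _ => ?_
    rw [mul_pow, C_pow]
  · -- degree bound
    intro i j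
    have h0 : ∀ (cc : F) (m n : ℕ), (C cc * X 0 ^ m * X 1 ^ n : MvPolynomial (Fin 2) F).totalDegree ≤ m + n := by
      intro cc m n
      calc (C cc * X 0 ^ m * X 1 ^ n : MvPolynomial (Fin 2) F).totalDegree
          ≤ (C cc * X 0 ^ m : MvPolynomial (Fin 2) F).totalDegree + (X 1 ^ n : MvPolynomial (Fin 2) F).totalDegree :=
            totalDegree_mul _ _
        _ ≤ ((C cc : MvPolynomial (Fin 2) F).totalDegree + (X 0 ^ m : MvPolynomial (Fin 2) F).totalDegree) + (X 1 ^ n : MvPolynomial (Fin 2) F).totalDegree :=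
            Nat.add_le_add_right (totalDegree_mul _ _) _
        _ ≤ (0 + m) + n := by
            refine add_le_add (add_le_add (le_of_eq (totalDegree_C _)) ?_) ?_
            · exact (totalDegree_X_pow _ _).le
            · exact (totalDegree_X_pow _ _).le
        _ = m + n := by omega
    have hA' : A.totalDegree ≤ γ + δ := h0 co γ δ
    have hB' : B.totalDegree ≤ α + β := by
      have := h0 1 α β
      rwa [map_one, one_mul] at this
    have hCB : (C (e i) * B).totalDegree ≤ α + β := by
      calc (C (e i) * B).totalDegree ≤ (C (e i) : MvPolynomial (Fin 2) F).totalDegree + B.totalDegree := totalDegree_mul _ _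
        _ ≤ 0 + (α + β) := add_le_add (totalDegree_C _).le hB'
        _ = α + β := by omega
    have hsum : (A + C (e i) * B).totalDegree ≤ max (γ + δ) (α + β) :=
      (totalDegree_add _ _).trans (max_le_max hA' hCB)
    have hfull : (C (bb i j) * (A + C (e i) * B)).totalDegree ≤ max (γ + δ) (α + β) := by
      calc (C (bb i j) * (A + C (e i) * B)).totalDegree
          ≤ (C (bb i j) : MvPolynomial (Fin 2) F).totalDegree + (A + C (e i) * B).totalDegree := totalDegree_mul _ _
        _ ≤ 0 + max (γ + δ) (α + β) := add_le_add (totalDegree_C _).le hsum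
        _ = max (γ + δ) (α + β) := by omega
    -- numeric bounds
    have hnum : ∀ n : ℕ, k * (n / k + n % k) ≤ n + (k - 1) * (k - 1) := by
      intro n
      have h1 : k * (n / k) + n % k = n := Nat.div_add_mod n k
      have h2 : n % k < k := Nat.mod_lt _ (by omega)
      have h3 : k * (n % k) = n % k + (k - 1) * (n % k) := by
        have hkk : k = 1 + (k - 1) := by omega
        calc k * (n % k) = (1 + (k - 1)) * (n % k) := by rw [← hkk]
          _ = n % k + (k - 1) * (n % k) := by ring
      have h4 : (k - 1) * (n % k) ≤ (k - 1) * (k - 1) := Nat.mul_le_mul_left _ (by omega)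
      calc k * (n / k + n % k) = k * (n / k) + k * (n % k) := by ring
        _ = k * (n / k) + (n % k + (k - 1) * (n % k)) := by rw [h3]
        _ ≤ k * (n / k) + (n % k + (k - 1) * (k - 1)) := by omega
        _ = n + (k - 1) * (k - 1) := by omega
    have hnum2 : ∀ n : ℕ, k * (n / k) ≤ n := fun n => Nat.mul_div_le n k
    have hkmax : k * max (γ + δ) (α + β) ≤ d + 2 * (k - 1) ^ 2 := by
      have hsq : (k - 1) ^ 2 = (k - 1) * (k - 1) := sq (k-1) ▸ rfl
      rcases max_choice (γ + δ) (α + β) with hmc | hmc <;> rw [hmc]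
      · have ha := hnum a
        have hb := hnum b
        have : k * (γ + δ) = k * (a / k + a % k) + k * (b / k + b % k) := by rw [hγ, hδ]; ring
        rw [this, hsq]
        omega
      · have ha := hnum2 a
        have hb := hnum2 b
        have : k * (α + β) = k * (a / k) + k * (b / k) := by rw [hα, hβ]; ring
        rw [this]
        omega
    calc ((C (bb i j) * (A + C (e i) * B)) ^ k).totalDegree
        ≤ k * (C (bb i j) * (A + C (e i) * B)).totalDegree := totalDegree_pow _ _
      _ ≤ k * max (γ + δ) (α + β) := Nat.mul_le_mul_left _ hfull
      _ ≤ d + 2 * (k - 1) ^ 2 := hkmax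


open MvPolynomial in
lemma aux_card {F : Type*} [Field F] (d : ℕ) (P : MvPolynomial (Fin 2) F)
    (hP : P.totalDegree = d) : 2 * P.support.card ≤ (d + 1) * (d + 2) := by
  classical
  set T : Finset (ℕ × ℕ) := (Finset.range (d + 1)).biUnion Finset.HasAntidiagonal.antidiagonal with hT
  have hdisj : ∀ n₁ ∈ Finset.range (d+1), ∀ n₂ ∈ Finset.range (d+1), n₁ ≠ n₂ →
      Disjoint (Finset.HasAntidiagonal.antidiagonal n₁) (Finset.HasAntidiagonal.antidiagonal n₂) := by
    intro n₁ _ n₂ _ hne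
    refine Finset.disjoint_left.mpr fun p hp1 hp2 => hne ?_
    rw [Finset.HasAntidiagonal.mem_antidiagonal] at hp1 hp2
    omega
  have hcardT : T.card = ∑ n ∈ Finset.range (d + 1), (n + 1) := by
    rw [hT, Finset.card_biUnion hdisj]
    exact Finset.sum_congr rfl fun n _ => Finset.Nat.card_antidiagonal n
  have h2T : 2 * T.card = (d + 1) * (d + 2) := by
    have h1 : ∑ i ∈ Finset.range (d + 2), i = (∑ i ∈ Finset.range (d+1), (i + 1)) + 0 :=
      Finset.sum_range_succ' (fun i => i) (d + 1)
    have h2 := Finset.sum_range_id_mul_two (d + 2)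
    have h1' : ∑ i ∈ Finset.range (d+1), (i+1) = ∑ i ∈ Finset.range (d+2), i := by omega
    rw [hcardT, h1', mul_comm, h2, show d + 2 - 1 = d + 1 from rfl, Nat.mul_comm]
  have hmem : ∀ m ∈ P.support, ((m : Fin 2 →₀ ℕ) 0, m 1) ∈ T := by
    intro m hm
    have hs : (m.sum fun _ e => e) ≤ P.totalDegree := le_totalDegree hm
    have hsum : m 0 + m 1 ≤ d := by
      have : (m.sum fun _ e => e) = m 0 + m 1 := by
        rw [Finsupp.sum_fintype _ _ (fun i => rfl), Fin.sum_univ_two]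
      omega
    rw [hT, Finset.mem_biUnion]
    exact ⟨m 0 + m 1, Finset.mem_range.mpr (by omega), Finset.HasAntidiagonal.mem_antidiagonal.mpr rfl⟩
  have hinj : 2 * P.support.card ≤ 2 * T.card := by
    have := Finset.card_le_card_of_injOn (fun m : Fin 2 →₀ ℕ => (m 0, m 1)) hmem ?_
    · omega
    · intro m₁ _ m₂ _ h
      ext i
      fin_cases i
      · exact congrArg Prod.fst h
      · exact congrArg Prod.snd h
  omega


/-- Every `P ∈ F[x,y]` of degree `d` is a sum of `s ≤ k·w·(d+1)(d+2)/2` `k`-th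
powers with `deg Qᵢ^k ≤ d + 2(k-1)²`. -/
theorem decomposition_low_degree (F : Type*) [Field F] (k w : ℕ) (hk : 2 ≤ k)
    (hw : 1 ≤ w) (hcard : (k : Cardinal) < Cardinal.mk F) (hchar : (k : F) ≠ 0)
    (hW : ∀ a : F, ∃ b : Fin w → F, a = ∑ i, b i ^ k)
    (d : ℕ) (P : MvPolynomial (Fin 2) F) (hP : P.totalDegree = d) :
    ∃ (s : ℕ) (Q : Fin s → MvPolynomial (Fin 2) F),
      2 * s ≤ k * w * (d + 1) * (d + 2) ∧
      P = ∑ i, Q i ^ k ∧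
      ∀ i, (Q i ^ k).totalDegree ≤ d + 2 * (k - 1) ^ 2 := by
  classical
  open MvPolynomial in
  obtain ⟨e, he, hesum⟩ := aux_exists_e F k hk hcard hchar
  obtain ⟨c, hc⟩ := aux_exists_c k hk hchar e he hesum
  have hmono : ∀ m : Fin 2 →₀ ℕ, m ∈ P.support →
      ∃ Q : Fin k → Fin w → MvPolynomial (Fin 2) F,
        (MvPolynomial.monomial m (MvPolynomial.coeff m P)) = ∑ i, ∑ j, Q i j ^ k ∧
        ∀ i j, (Q i j ^ k).totalDegree ≤ d + 2 * (k - 1) ^ 2 := by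
    intro m hm
    have hdeg : m 0 + m 1 ≤ d := by
      have hs : (m.sum fun _ e => e) ≤ P.totalDegree := MvPolynomial.le_totalDegree hm
      have heq : (m.sum fun _ e => e) = m 0 + m 1 := by
        rw [Finsupp.sum_fintype _ _ (fun i => rfl), Fin.sum_univ_two]
      omega
    obtain ⟨Q, h1, h2⟩ := aux_monomial k w hk hchar hW e c hc d
      (MvPolynomial.coeff m P) (m 0) (m 1) hdeg
    refine ⟨Q, ?_, h2⟩
    rw [← h1, MvPolynomial.monomial_eq]
    have hprod : (m.prod fun n e => (MvPolynomial.X n : MvPolynomial (Fin 2) F) ^ e)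
        = MvPolynomial.X 0 ^ m 0 * MvPolynomial.X 1 ^ m 1 := by
      rw [Finsupp.prod_fintype _ _ (fun i => pow_zero _), Fin.prod_univ_two]
    rw [hprod, mul_assoc]
  choose QQ hQ1 hQ2 using hmono
  set s := P.support.card * (k * w) with hs
  have hcardI : Fintype.card (↥P.support × Fin k × Fin w) = s := by
    simp [Fintype.card_prod, Fintype.card_coe, hs]
  set E : (↥P.support × Fin k × Fin w) ≃ Fin s :=
    (Fintype.equivFin _).trans (finCongr hcardI) with hE
  refine ⟨s, fun n => QQ (E.symm n).1.1 (E.symm n).1.2 (E.symm n).2.1 (E.symm n).2.2, ?_, ?_, ?_⟩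
  · -- cardinality bound
    have hcb := aux_card d P hP
    calc 2 * s = (2 * P.support.card) * (k * w) := by rw [hs]; ring
      _ ≤ ((d + 1) * (d + 2)) * (k * w) := Nat.mul_le_mul_right _ hcb
      _ = k * w * (d + 1) * (d + 2) := by ring
  · -- the decomposition
    have hPsum : P = ∑ m ∈ P.support, MvPolynomial.monomial m (MvPolynomial.coeff m P) :=
      (MvPolynomial.support_sum_monomial_coeff P).symm
    calc P = ∑ m ∈ P.support, MvPolynomial.monomial m (MvPolynomial.coeff m P) := hPsum
      _ = ∑ m ∈ P.support.attach, ∑ i, ∑ j, QQ m.1 m.2 i j ^ k := by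
          rw [← Finset.sum_attach P.support (fun m => MvPolynomial.monomial m (MvPolynomial.coeff m P))]
          exact Finset.sum_congr rfl fun m _ => hQ1 m.1 m.2
      _ = ∑ t : ↥P.support × Fin k × Fin w, QQ t.1.1 t.1.2 t.2.1 t.2.2 ^ k := by
          rw [Fintype.sum_prod_type, Finset.univ_eq_attach]
          exact Finset.sum_congr rfl fun x _ => by rw [Fintype.sum_prod_type]
      _ = ∑ n : Fin s, QQ (E.symm n).1.1 (E.symm n).1.2 (E.symm n).2.1 (E.symm n).2.2 ^ k :=
          (Equiv.sum_comp E.symm (fun t => QQ t.1.1 t.1.2 t.2.1 t.2.2 ^ k)).symm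
  · intro n
    exact hQ2 _ _ _ _
end

section
/- Let F be a field with more than k elements whose characteristic does not divide k, and in which each element is a sum of w k-th powers. Every P ∈ F[x,y] admits a decomposition P = Q₁^k + ⋯ + Q_s^k with deg Qᵢ^k ≤ 2·deg P + 4k² and s ≤ k²(2k-1)·w. In particular, the bound on the number of terms is independent of deg P. -/
open Finset MvPolynomial


open Finset

private lemma exists_lam {F : Type*} [Field F] {k : ℕ} (hk : 1 ≤ k) (a : Fin (k+1) ↪ F) :
    ∃ lam : Fin (k+1) → F, ∀ m : ℕ, m ≤ k →
      ∑ t, lam t * a t ^ m = if m = 1 then 1 else 0 := by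
  set M : Matrix (Fin (k+1)) (Fin (k+1)) F := (Matrix.vandermonde (fun t => a t)).transpose with hM
  have hdet : IsUnit M.det := by
    rw [hM, Matrix.det_transpose, Matrix.det_vandermonde, isUnit_iff_ne_zero]
    refine Finset.prod_ne_zero_iff.2 fun i _ => Finset.prod_ne_zero_iff.2 fun j hj => ?_
    exact sub_ne_zero.2 (a.injective.ne (ne_of_gt (Finset.mem_Ioi.1 hj)))
  set lam := M⁻¹.mulVec (Pi.single 1 1) with hlam
  refine ⟨lam, fun m hm => ?_⟩
  have key : M.mulVec lam = Pi.single 1 1 := by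
    rw [hlam, Matrix.mulVec_mulVec, Matrix.mul_nonsing_inv _ hdet, Matrix.one_mulVec]
  have h2 := congrFun key ⟨m, by omega⟩
  have h3 : M.mulVec lam ⟨m, by omega⟩ = ∑ t, lam t * a t ^ m := by
    simp only [Matrix.mulVec, dotProduct, hM, Matrix.transpose_apply,
      Matrix.vandermonde_apply]
    exact Finset.sum_congr rfl fun t _ => mul_comm _ _
  rw [h3] at h2
  rw [h2, Pi.single_apply]
  congr 1
  simp [Fin.ext_iff, Fin.val_one, Nat.mod_eq_of_lt (by omega : 1 < k+1)]

open Finset MvPolynomial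

private lemma sum_pow_eq {F : Type*} [Field F] {σ : Type*} {k : ℕ} (hk : 1 ≤ k)
    (lam aa : Fin (k+1) → F)
    (H : ∀ m : ℕ, m ≤ k → ∑ t, lam t * aa t ^ m = if m = 1 then 1 else 0)
    (u v : MvPolynomial σ F) :
    ∑ t, C (lam t) * (u + C (aa t) * v) ^ k
      = (k : MvPolynomial σ F) * (u ^ (k-1) * v) := by
  have step : ∀ t : Fin (k+1), C (lam t) * (u + C (aa t) * v) ^ k
      = ∑ m ∈ Finset.range (k+1),
          C (lam t * aa t ^ (k - m)) * (u ^ m * v ^ (k - m) * (k.choose m : MvPolynomial σ F)) := by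
    intro t
    rw [add_pow, Finset.mul_sum]
    refine Finset.sum_congr rfl fun m hm => ?_
    rw [mul_pow, ← C_pow, map_mul]
    ring
  simp only [step]
  rw [Finset.sum_comm]
  have step2 : ∀ m ∈ Finset.range (k+1),
      ∑ t : Fin (k+1), C (lam t * aa t ^ (k - m)) * (u ^ m * v ^ (k - m) * (k.choose m : MvPolynomial σ F))
      = C (if k - m = 1 then (1:F) else 0) * (u ^ m * v ^ (k - m) * (k.choose m : MvPolynomial σ F)) := by
    intro m hm
    rw [← Finset.sum_mul, ← map_sum, H (k - m) (by omega)]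
  rw [Finset.sum_congr rfl step2]
  rw [Finset.sum_eq_single (k-1)]
  · have h1 : k - (k-1) = 1 := by omega
    have hch : k.choose (k-1) = k := by
      rw [← Nat.choose_symm (by omega : k - 1 ≤ k), h1, Nat.choose_one_right]
    rw [h1, hch]
    simp only [if_pos trivial, map_one, one_mul, pow_one]
    ring
  · intro m hm hne
    have : k - m ≠ 1 := by simp at hm; omega
    rw [if_neg this, map_zero, zero_mul]
  · intro h
    exact absurd (Finset.mem_range.2 (by omega)) h

open Finset MvPolynomial

private noncomputable def cor (δ i j : ℕ) : Fin 2 →₀ ℕ :=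
  Finsupp.single 0 (i * δ) + Finsupp.single 1 (j * δ)

private lemma cor_apply0 (δ i j : ℕ) : cor δ i j 0 = i * δ := by
  simp [cor, Finsupp.single_apply]

private lemma cor_apply1 (δ i j : ℕ) : cor δ i j 1 = j * δ := by
  simp [cor, Finsupp.single_apply]

private lemma fin2_apply_le_sum (e : Fin 2 →₀ ℕ) (i : Fin 2) :
    e i ≤ e.sum fun _ n => n := by
  rw [Finsupp.sum_fintype _ _ (fun _ => rfl)]
  exact Finset.single_le_sum (fun j _ => Nat.zero_le _) (Finset.mem_univ i)

private lemma tiling {F : Type*} [CommSemiring F] (P : MvPolynomial (Fin 2) F) (k δ : ℕ)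
    (hδ : 0 < δ) (hd : P.totalDegree < k * δ) :
    P = ∑ p ∈ Finset.range k ×ˢ Finset.range k,
      (monomial (cor δ p.1 p.2) (1:F)) *
        ∑ e ∈ P.support.filter (fun e => (e 0 / δ, e 1 / δ) = p),
          monomial (e - cor δ p.1 p.2) (P.coeff e) := by
  have hmaps : ∀ e ∈ P.support, (e 0 / δ, e 1 / δ) ∈ Finset.range k ×ˢ Finset.range k := by
    intro e he
    have h0 : e 0 ≤ P.totalDegree := le_trans (fin2_apply_le_sum e 0) (MvPolynomial.le_totalDegree he)
    have h1 : e 1 ≤ P.totalDegree := le_trans (fin2_apply_le_sum e 1) (MvPolynomial.le_totalDegree he)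
    rw [Finset.mem_product, Finset.mem_range, Finset.mem_range]
    constructor <;> rw [Nat.div_lt_iff_lt_mul hδ] <;> omega
  conv_lhs => rw [← P.support_sum_monomial_coeff]
  rw [← Finset.sum_fiberwise_of_maps_to hmaps (fun e => monomial e (P.coeff e))]
  refine Finset.sum_congr rfl fun p hp => ?_
  rw [Finset.mul_sum]
  refine Finset.sum_congr rfl fun e he => ?_
  rw [Finset.mem_filter] at he
  have h2 := he.2
  rw [Prod.ext_iff] at h2
  have hle : cor δ p.1 p.2 ≤ e := by
    refine Finsupp.le_def.2 (Fin.forall_fin_two.2 ⟨?_, ?_⟩)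
    · rw [cor_apply0, ← h2.1]
      exact Nat.div_mul_le_self _ _
    · rw [cor_apply1, ← h2.2]
      exact Nat.div_mul_le_self _ _
  rw [monomial_mul, one_mul, add_tsub_cancel_of_le hle]


/-- Every `P ∈ F[x,y]` is a sum of at most `k²(2k-1)·w` `k`-th powers of
degree `≤ 2·deg P + 4k²`: the number of terms does not depend on `deg P`. -/
theorem decomposition_medium_degree (F : Type*) [Field F] (k w : ℕ) (hk : 2 ≤ k)
    (hw : 1 ≤ w) (hcard : (k : Cardinal) < Cardinal.mk F) (hchar : (k : F) ≠ 0)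
    (hW : ∀ a : F, ∃ b : Fin w → F, a = ∑ i, b i ^ k)
    (P : MvPolynomial (Fin 2) F) :
    ∃ (s : ℕ) (Q : Fin s → MvPolynomial (Fin 2) F),
      s ≤ k ^ 2 * (2 * k - 1) * w ∧
      P = ∑ i, Q i ^ k ∧
      ∀ i, (Q i ^ k).totalDegree ≤ 2 * P.totalDegree + 4 * k ^ 2 := by
  classical
  -- k+1 distinct elements of F
  have hle : Nonempty (Fin (k+1) ↪ F) := by
    rw [← Cardinal.lift_mk_le', Cardinal.lift_mk_fin, Cardinal.lift_uzero]
    calc ((k+1 : ℕ) : Cardinal) = (k : Cardinal) + 1 := by push_cast; ring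
      _ ≤ _ := (Cardinal.add_one_le_succ _).trans (Order.succ_le_of_lt hcard)
  obtain ⟨a⟩ := hle
  obtain ⟨lam, hlam⟩ := exists_lam (by omega) a
  set d := P.totalDegree with hd
  set m := k * (k-1) with hm
  have hm0 : 0 < m := by
    rw [hm]; exact Nat.mul_pos (by omega : 0 < k) (by omega : 0 < k - 1)
  set q := d / m + 1 with hq
  set δ := (k-1) * q with hδdef
  have hq0 : 0 < q := by rw [hq]; exact Nat.succ_pos _
  have hδ : 0 < δ := by rw [hδdef]; exact Nat.mul_pos (by omega : 0 < k - 1) hq0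
  have hkd : k * δ = m * (d / m) + m := by rw [hδdef, hq, hm]; ring
  have hdlt : d < k * δ := by
    have h1 := Nat.mod_add_div d m
    have h2 := Nat.mod_lt d hm0
    omega
  have hm2 : m ≤ k^2 := by
    rw [hm, pow_two]; exact Nat.mul_le_mul_left k (by omega)
  have hkdle : k * δ ≤ d + k^2 := by
    have h3 : m * (d / m) ≤ d := by rw [mul_comm]; exact Nat.div_mul_le_self d m
    omega
  -- tile pieces
  set V : ℕ → ℕ → MvPolynomial (Fin 2) F := fun i j =>
    ∑ e ∈ P.support.filter (fun e => (e 0 / δ, e 1 / δ) = (i, j)),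
      monomial (e - cor δ i j) (P.coeff e) with hV
  set U : ℕ → ℕ → MvPolynomial (Fin 2) F := fun i j => X 0 ^ (i*q) * X 1 ^ (j*q) with hUdef
  have hU : ∀ i j : ℕ, (U i j)^(k-1) = monomial (cor δ i j) (1:F) := by
    intro i j
    rw [hUdef]
    simp only
    rw [mul_pow, ← pow_mul, ← pow_mul, X_pow_eq_monomial, X_pow_eq_monomial,
      monomial_mul, one_mul]
    have e1 : i*q*(k-1) = i*δ := by rw [hδdef]; ring
    have e2 : j*q*(k-1) = j*δ := by rw [hδdef]; ring
    rw [e1, e2]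
    rfl
  -- scalar decompositions
  have hμ : ∀ t : Fin (k+1), ∃ b : Fin w → F, (k:F)⁻¹ * lam t = ∑ l, b l ^ k := fun t => hW ((k:F)⁻¹ * lam t)
  choose b hb using hμ
  -- per-tile identity
  have tile : ∀ i j : ℕ,
      ∑ t : Fin (k+1), ∑ l : Fin w, (C (b t l) * (U i j + C (a t) * V i j))^k
        = (monomial (cor δ i j) (1:F)) * V i j := by
    intro i j
    have inner : ∀ t : Fin (k+1),
        ∑ l : Fin w, (C (b t l) * (U i j + C (a t) * V i j))^k
          = C ((k:F)⁻¹) * (C (lam t) * (U i j + C (a t) * V i j)^k) := by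
      intro t
      have : ∀ l : Fin w, (C (b t l) * (U i j + C (a t) * V i j))^k
          = C ((b t l)^k) * (U i j + C (a t) * V i j)^k := by
        intro l; rw [mul_pow, C_pow]
      rw [Finset.sum_congr rfl (fun l _ => this l), ← Finset.sum_mul, ← map_sum,
        ← hb t, map_mul, mul_assoc]
    rw [Finset.sum_congr rfl (fun t _ => inner t), ← Finset.mul_sum,
      sum_pow_eq (by omega) lam (fun t => a t) hlam (U i j) (V i j),
      ← map_natCast (C : F →+* MvPolynomial (Fin 2) F) k, ← mul_assoc, ← map_mul,
      inv_mul_cancel₀ hchar, map_one, one_mul, hU]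
  -- global indexing
  set T := (Fin k × Fin k) × Fin (k+1) × Fin w with hT
  set Q0 : T → MvPolynomial (Fin 2) F := fun x =>
    C (b x.2.1 x.2.2) * (U x.1.1 x.1.2 + C (a x.2.1) * V x.1.1 x.1.2) with hQ0
  refine ⟨Fintype.card T, fun i => Q0 ((Fintype.equivFin T).symm i), ?_, ?_, ?_⟩
  · -- counting
    have hcardT : Fintype.card T = k * k * ((k+1) * w) := by
      simp [hT, Fintype.card_prod]
    rw [hcardT]
    have h1 : k + 1 ≤ 2*k - 1 := by omega
    calc k * k * ((k+1) * w) = k^2 * (k+1) * w := by ring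
      _ ≤ k^2 * (2*k-1) * w := by
          exact Nat.mul_le_mul_right w (Nat.mul_le_mul_left (k^2) h1)
  · -- the decomposition
    rw [Equiv.sum_comp (Fintype.equivFin T).symm (fun x => Q0 x ^ k)]
    rw [Fintype.sum_prod_type]
    have step1 : ∀ p : Fin k × Fin k,
        ∑ y : Fin (k+1) × Fin w, Q0 (p, y) ^ k
          = (monomial (cor δ p.1.val p.2.val) (1:F)) * V p.1.val p.2.val := by
      intro p
      rw [Fintype.sum_prod_type]
      exact tile p.1.val p.2.val
    rw [Finset.sum_congr rfl (fun p _ => step1 p)]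
    rw [Fintype.sum_prod_type]
    have step2 : ∀ i : Fin k,
        ∑ j : Fin k, (monomial (cor δ i.val j.val) (1:F)) * V i.val j.val
          = ∑ j ∈ Finset.range k, (monomial (cor δ i.val j) (1:F)) * V i.val j := by
      intro i
      exact Fin.sum_univ_eq_sum_range (fun j => (monomial (cor δ i.val j) (1:F)) * V i.val j) k
    rw [Finset.sum_congr rfl (fun i _ => step2 i)]
    rw [Fin.sum_univ_eq_sum_range
      (fun i => ∑ j ∈ Finset.range k, (monomial (cor δ i j) (1:F)) * V i j) k]
    rw [← Finset.sum_product']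
    exact (tiling P k δ hδ hdlt).symm ▸ rfl
  · -- degrees
    intro i
    set x := (Fintype.equivFin T).symm i with hx
    have hdeg : (Q0 x).totalDegree ≤ 2 * δ := by
      have hCb : (C (b x.2.1 x.2.2) : MvPolynomial (Fin 2) F).totalDegree = 0 := totalDegree_C _
      have hUd : (U x.1.1.val x.1.2.val).totalDegree ≤ 2 * δ := by
        rw [hUdef]
        simp only
        refine le_trans (totalDegree_mul _ _) ?_
        rw [totalDegree_X_pow, totalDegree_X_pow]
        have h1 : x.1.1.val ≤ k - 1 := by omega
        have h2 : x.1.2.val ≤ k - 1 := by omega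
        calc x.1.1.val * q + x.1.2.val * q ≤ (k-1)*q + (k-1)*q :=
              Nat.add_le_add (Nat.mul_le_mul_right q h1) (Nat.mul_le_mul_right q h2)
          _ = 2 * δ := by rw [hδdef]; ring
      have hVd : (V x.1.1.val x.1.2.val).totalDegree ≤ 2 * δ := by
        rw [hV]
        simp only
        refine le_trans (totalDegree_finset_sum _ _) ?_
        refine Finset.sup_le fun e he => ?_
        rw [Finset.mem_filter] at he
        have h2 := he.2
        rw [Prod.mk.injEq] at h2
        refine le_trans (totalDegree_monomial_le _ _) ?_
        rw [Finsupp.sum_fintype _ _ (fun _ => rfl), Fin.sum_univ_two]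
        have ha0 : (e - cor δ x.1.1.val x.1.2.val) 0 = e 0 - e 0 / δ * δ := by
          rw [Finsupp.tsub_apply, cor_apply0, h2.1]
        have ha1 : (e - cor δ x.1.1.val x.1.2.val) 1 = e 1 - e 1 / δ * δ := by
          rw [Finsupp.tsub_apply, cor_apply1, h2.2]
        have hb0 : e 0 - e 0 / δ * δ < δ := by
          have := Nat.mod_add_div' (e 0) δ
          have := Nat.mod_lt (e 0) hδ
          omega
        have hb1 : e 1 - e 1 / δ * δ < δ := by
          have := Nat.mod_add_div' (e 1) δ
          have := Nat.mod_lt (e 1) hδ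
          omega
        rw [ha0, ha1]
        simp only [id_eq]
        omega
      have h3 : (U x.1.1.val x.1.2.val + C (a x.2.1) * V x.1.1.val x.1.2.val).totalDegree ≤ 2*δ := by
        refine le_trans (totalDegree_add _ _) (max_le hUd ?_)
        refine le_trans (totalDegree_mul _ _) ?_
        rw [totalDegree_C, zero_add]
        exact hVd
      rw [hQ0]
      simp only
      refine le_trans (totalDegree_mul _ _) ?_
      rw [hCb, zero_add]
      exact h3
    calc (Q0 x ^ k).totalDegree ≤ k * (Q0 x).totalDegree := totalDegree_pow _ _
      _ ≤ k * (2 * δ) := Nat.mul_le_mul_left k hdeg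
      _ = 2 * (k * δ) := by ring
      _ ≤ 2 * (d + k^2) := Nat.mul_le_mul_left 2 hkdle
      _ = 2 * d + 2 * k^2 := by ring
      _ ≤ 2 * d + 4 * k^2 := by omega
end

section
/- Approximate k-th root in two variables: Let F be a field whose characteristic does not divide k, and let m, n, d = m + n be positive integers divisible by k. Let P ∈ F[x,y] with deg P ≤ d and deg_x P < m. Then there exists a unique polynomial Q ∈ F[x,y], monic in x with deg_x Q = m/k, deg Q ≤ d/k, such that P + x^m y^n − Q^k has no monomial x^i y^j with i ≥ m − m/k and j ≥ n − n/k. -/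
namespace ApproxRoot
open Polynomial

variable {F : Type*} [Field F]



/-- shift down by `e`: coeff j of result is coeff (j+e). -/
noncomputable def shift (e : ℕ) (f : Polynomial F) : Polynomial F := Polynomial.divX^[e] f

lemma coeff_shift (e : ℕ) (f : Polynomial F) (j : ℕ) :
    (shift e f).coeff j = f.coeff (j + e) := by
  induction e generalizing f with
  | zero => simp [shift]
  | succ e ih =>
    rw [shift, Function.iterate_succ_apply]
    show (shift e f.divX).coeff j = _
    rw [ih, Polynomial.coeff_divX]
    congr 1

/-- total-degree bound, coefficientwise. -/
def tb (D : ℕ) (f : Polynomial (Polynomial F)) : Prop :=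
  ∀ i j : ℕ, D < i + j → (f.coeff i).coeff j = 0

lemma tb_mul {D E : ℕ} {f g : Polynomial (Polynomial F)} (hf : tb D f) (hg : tb E g) :
    tb (D + E) (f * g) := by
  intro i j h
  rw [Polynomial.coeff_mul, Polynomial.finset_sum_coeff]
  apply Finset.sum_eq_zero
  intro a ha
  rw [Finset.HasAntidiagonal.mem_antidiagonal] at ha
  rw [Polynomial.coeff_mul]
  apply Finset.sum_eq_zero
  intro b hb
  rw [Finset.HasAntidiagonal.mem_antidiagonal] at hb
  rcases (by omega : D < a.1 + b.1 ∨ E < a.2 + b.2) with hc | hc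
  · rw [hf a.1 b.1 hc, zero_mul]
  · rw [hg a.2 b.2 hc, mul_zero]

lemma tb_pow {D : ℕ} {f : Polynomial (Polynomial F)} (hf : tb D f) (e : ℕ) :
    tb (e * D) (f ^ e) := by
  induction e with
  | zero =>
    intro i j h
    simp only [pow_zero, Polynomial.coeff_one]
    rcases eq_or_ne i 0 with rfl | hi
    · rw [if_pos rfl, Polynomial.coeff_one, if_neg (by omega)]
    · rw [if_neg hi, Polynomial.coeff_zero]
  | succ e ih =>
    rw [pow_succ]
    have := tb_mul ih hf
    rwa [show e * D + D = (e+1) * D by ring] at this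




lemma step {k p q t : ℕ} (hk : 2 ≤ k) (ht : 1 ≤ t) (htp : t ≤ p)
    {Q₁ Q₂ : Polynomial (Polynomial F)}
    (h1 : ∀ a, p < a → Q₁.coeff a = 0)
    (hc : Q₁.coeff p = X ^ q)
    (hhi : ∀ a, p - t < a → Q₂.coeff a = Q₁.coeff a) :
    (Q₂ ^ k).coeff (k*p - t) = (Q₁ ^ k).coeff (k*p - t)
      + (k : Polynomial F) * (Q₂.coeff (p - t) - Q₁.coeff (p - t)) * X ^ ((k-1)*q) := by
  have hkp : (k-1) * p = k * p - p := Nat.sub_one_mul k p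
  have hpk : p ≤ k * p := Nat.le_mul_of_pos_left p (by omega)
  have hd1 : Q₁.natDegree ≤ p := natDegree_le_iff_coeff_eq_zero.mpr h1
  have hcne : Q₁.coeff p ≠ 0 := by rw [hc]; exact pow_ne_zero _ X_ne_zero
  have hdeg : Q₁.natDegree = p := le_antisymm hd1 (le_natDegree_of_ne_zero hcne)
  set D : Polynomial (Polynomial F) := Q₂ - Q₁ with hD
  have hDc : ∀ a, p - t < a → D.coeff a = 0 := by
    intro a ha; rw [hD, coeff_sub, hhi a ha, sub_self]
  have hDd : D.natDegree ≤ p - t := natDegree_le_iff_coeff_eq_zero.mpr hDc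
  have hQ2 : Q₂ = Q₁ + D := by rw [hD]; ring
  conv_lhs => rw [hQ2, add_pow, finset_sum_coeff]
  rw [← Finset.sum_subset (s₁ := ({k-1, k} : Finset ℕ))
      (by intro x hx; simp only [Finset.mem_insert, Finset.mem_singleton] at hx
          rcases hx with rfl | rfl <;> simp [Finset.mem_range] <;> omega)
      ?van]
  case van =>
    intro r hr hr'
    simp only [Finset.mem_insert, Finset.mem_singleton, not_or] at hr'
    rw [Finset.mem_range] at hr
    apply coeff_eq_zero_of_natDegree_lt
    calc (Q₁ ^ r * D ^ (k - r) * ((k.choose r : ℕ) : Polynomial (Polynomial F))).natDegree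
        ≤ (Q₁ ^ r * D ^ (k - r)).natDegree + ((k.choose r : ℕ) : Polynomial (Polynomial F)).natDegree :=
          natDegree_mul_le
      _ = (Q₁ ^ r * D ^ (k - r)).natDegree := by rw [natDegree_natCast, add_zero]
      _ ≤ r * p + (k - r) * (p - t) := natDegree_mul_le.trans (add_le_add
            (natDegree_pow_le.trans (Nat.mul_le_mul_left r hd1))
            (natDegree_pow_le.trans (Nat.mul_le_mul_left (k-r) hDd)))
      _ < k * p - t := by
          have h2 : 2 ≤ k - r := by omega
          have e1 : (k - r) * (p - t) + (k - r) * t = (k - r) * p := by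
            rw [← Nat.mul_add]; congr 1; omega
          have e2 : r * p + (k - r) * p = k * p := by
            rw [← Nat.add_mul]; congr 1; omega
          have e3 : 2 * t ≤ (k - r) * t := Nat.mul_le_mul_right _ h2
          omega
  rw [Finset.sum_pair (by omega : k - 1 ≠ k)]
  have hterm_k : Q₁ ^ k * D ^ (k - k) * ((k.choose k : ℕ) : Polynomial (Polynomial F)) = Q₁ ^ k := by
    simp
  have hkk : k - (k - 1) = 1 := by omega
  have hch : k.choose (k - 1) = k := by
    rw [← Nat.choose_symm (by omega : k - 1 ≤ k), hkk, Nat.choose_one_right]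
  have htop : (Q₁ ^ (k-1)).coeff ((k-1) * p) = X ^ ((k-1)*q) := by
    rw [← hdeg, coeff_pow_mul_natDegree, leadingCoeff, hdeg, hc, ← pow_mul, mul_comm q (k-1)]
  have hterm_k1 : (Q₁ ^ (k-1) * D ^ (k - (k-1)) * ((k.choose (k-1) : ℕ) : Polynomial (Polynomial F))).coeff (k*p - t)
      = (k : Polynomial F) * (D.coeff (p - t)) * X ^ ((k-1)*q) := by
    rw [hkk, hch, pow_one, ← Polynomial.C_eq_natCast, coeff_mul_C, Polynomial.coeff_mul]
    rw [Finset.sum_eq_single ((k-1)*p, p-t)]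
    · rw [htop]; ring
    · rintro ⟨a, b⟩ hab hne
      rw [Finset.HasAntidiagonal.mem_antidiagonal] at hab
      have hne' : a ≠ (k-1)*p ∨ b ≠ p-t := by
        by_contra h; push_neg at h; exact hne (Prod.ext h.1 h.2)
      simp only at hab ⊢
      rcases lt_or_ge (p - t) b with hb | hb
      · simp [hDc b hb]
      · have ha : (k-1) * p < a := by omega
        have : (Q₁ ^ (k-1)).coeff a = 0 := by
          apply coeff_eq_zero_of_natDegree_lt
          exact lt_of_le_of_lt (natDegree_pow_le.trans (by rw [hdeg])) ha
        simp [this]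
    · intro h
      exfalso; apply h
      rw [Finset.HasAntidiagonal.mem_antidiagonal]
      omega
  rw [hterm_k, hterm_k1]
  have hDco : D.coeff (p - t) = Q₂.coeff (p-t) - Q₁.coeff (p-t) := by rw [hD, coeff_sub]
  rw [hDco]; ring




/-- sequence of partial approximants -/
noncomputable def seq (k p q : ℕ) (kinv : F) (P : Polynomial (Polynomial F)) :
    ℕ → Polynomial (Polynomial F)
  | 0 => Polynomial.C (X ^ q) * Polynomial.X ^ p
  | (t+1) => seq k p q kinv P t +
      Polynomial.C (Polynomial.C kinv *
        shift ((k-1)*q) ((P - (seq k p q kinv P t)^k).coeff (k*p - (t+1)))) *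
      Polynomial.X ^ (p - (t+1))



lemma inv (k p q : ℕ) (hk : 2 ≤ k) (hchar : (k:F) ≠ 0)
    (P : Polynomial (Polynomial F))
    (hPd : ∀ i j, k*(p+q) < i + j → (P.coeff i).coeff j = 0)
    (t : ℕ) (htp : t ≤ p) :
    (∀ a, p < a → (seq k p q (k:F)⁻¹ P t).coeff a = 0) ∧
    ((seq k p q (k:F)⁻¹ P t).coeff p = X ^ q) ∧
    tb (p+q) (seq k p q (k:F)⁻¹ P t) ∧
    (∀ s, 1 ≤ s → s ≤ t → ∀ j, (k-1)*q ≤ j →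
      (((seq k p q (k:F)⁻¹ P t) ^ k).coeff (k*p - s)).coeff j
        = (P.coeff (k*p - s)).coeff j) := by
  have hkq : (k-1) * q = k * q - q := Nat.sub_one_mul k q
  have hqk : q ≤ k * q := Nat.le_mul_of_pos_left q (by omega)
  induction t with
  | zero =>
    refine ⟨?_, ?_, ?_, ?_⟩
    · intro a ha
      rw [seq, coeff_C_mul_X_pow, if_neg (by omega)]
    · rw [seq, coeff_C_mul_X_pow, if_pos rfl]
    · intro i j hij
      rw [seq, coeff_C_mul_X_pow]
      rcases eq_or_ne i p with rfl | hi
      · rw [if_pos rfl, coeff_X_pow, if_neg (by omega)]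
      · rw [if_neg hi, coeff_zero]
    · intro s hs hs0; omega
  | succ t ih =>
    obtain ⟨iha, ihb, ihc, ihd⟩ := ih (by omega)
    set kinv : F := (k:F)⁻¹
    set Qt := seq k p q kinv P t with hQt
    set c : Polynomial F := Polynomial.C kinv *
        shift ((k-1)*q) ((P - Qt^k).coeff (k*p - (t+1))) with hc
    have hseq : seq k p q kinv P (t+1) = Qt + Polynomial.C c * Polynomial.X ^ (p - (t+1)) := by
      rw [seq]
    have hco : ∀ a, (seq k p q kinv P (t+1)).coeff a
        = Qt.coeff a + if a = p-(t+1) then c else 0 := by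
      intro a; rw [hseq, coeff_add, coeff_C_mul_X_pow]
    -- coefficient bound for c
    have hcc : ∀ j, q + (t+1) < j → c.coeff j = 0 := by
      intro j hj
      rw [hc, coeff_C_mul, coeff_shift, coeff_sub, coeff_sub]
      have h1 : (P.coeff (k*p - (t+1))).coeff (j + (k-1)*q) = 0 := by
        apply hPd; have : t + 1 ≤ p := by omega
        have h2 : p ≤ k*p := Nat.le_mul_of_pos_left p (by omega)
        have h3 : k*(p+q) = k*p + k*q := by ring
        omega
      have h2 : ((Qt^k).coeff (k*p - (t+1))).coeff (j + (k-1)*q) = 0 := by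
        apply tb_pow ihc k
        have h2 : p ≤ k*p := Nat.le_mul_of_pos_left p (by omega)
        have h3 : k*(p+q) = k*p + k*q := by ring
        omega
      rw [h1, h2, sub_self, mul_zero]
    refine ⟨?_, ?_, ?_, ?_⟩
    · intro a ha
      rw [hco, if_neg (by omega), add_zero, iha a ha]
    · rw [hco, if_neg (by omega), add_zero, ihb]
    · intro i j hij
      rw [hco]
      rcases eq_or_ne i (p - (t+1)) with rfl | hi
      · rw [if_pos rfl, coeff_add, ihc _ _ hij, zero_add]
        apply hcc; omega
      · rw [if_neg hi, add_zero]; exact ihc _ _ hij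
    · intro s hs1 hs2 j hj
      have hstep := step (F := F) hk hs1 (by omega)
        (Q₁ := Qt) (Q₂ := seq k p q kinv P (t+1)) iha ihb
        (by intro a ha; rw [hco, if_neg (by omega), add_zero])
      rcases eq_or_ne s (t+1) with rfl | hst
      · -- the new level
        have hΔ : (seq k p q kinv P (t+1)).coeff (p - (t+1)) - Qt.coeff (p - (t+1)) = c := by
          rw [hco, if_pos rfl]; ring
        rw [hstep, coeff_add, hΔ]
        have hX : ((k : Polynomial F) * c * X ^ ((k-1)*q)).coeff j
            = (k : F) * c.coeff (j - (k-1)*q) := by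
          rw [coeff_mul_X_pow', if_pos hj, ← Polynomial.C_eq_natCast, coeff_C_mul]
        rw [hX, hc, coeff_C_mul, coeff_shift]
        have hjq : j - (k-1)*q + (k-1)*q = j := by omega
        rw [hjq, coeff_sub, coeff_sub]
        have : (k:F) * (kinv * ((P.coeff (k*p - (t+1))).coeff j - ((Qt^k).coeff (k*p - (t+1))).coeff j))
            = (P.coeff (k*p - (t+1))).coeff j - ((Qt^k).coeff (k*p - (t+1))).coeff j := by
          rw [← mul_assoc, mul_inv_cancel₀ hchar, one_mul]
        rw [this]; ring
      · -- old levels unchanged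
        have hΔ : (seq k p q kinv P (t+1)).coeff (p - s) - Qt.coeff (p - s) = 0 := by
          rw [hco, if_neg (by omega)]; ring
        rw [hstep, hΔ, mul_zero, zero_mul, add_zero]
        exact ihd s hs1 (by omega) j hj


theorem aux (k p q : ℕ) (hk : 2 ≤ k) (hchar : (k:F) ≠ 0)
    (P : Polynomial (Polynomial F))
    (hPx : ∀ i, k*p ≤ i → P.coeff i = 0)
    (hPd : ∀ i j, k*(p+q) < i + j → (P.coeff i).coeff j = 0) :
    ∃! Q : Polynomial (Polynomial F),
      (∀ i j, p + q < i + j → (Q.coeff i).coeff j = 0) ∧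
      (Q.coeff p = X ^ q) ∧
      (∀ i, p < i → Q.coeff i = 0) ∧
      (∀ i j, k*p - p ≤ i → k*q - q ≤ j →
        ((P + Polynomial.X ^ (k*p) * Polynomial.C (X ^ (k*q)) - Q ^ k).coeff i).coeff j = 0) := by
  have hkp : (k-1) * p = k * p - p := Nat.sub_one_mul k p
  have hkq : (k-1) * q = k * q - q := Nat.sub_one_mul k q
  have hpk : p ≤ k * p := Nat.le_mul_of_pos_left p (by omega)
  have hqk : q ≤ k * q := Nat.le_mul_of_pos_left q (by omega)
  obtain ⟨Qa, Qb, Qc, Qd⟩ := inv k p q hk hchar P hPd p le_rfl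
  set Q := seq k p q (k:F)⁻¹ P p with hQdef
  have hQdeg : Q.natDegree = p := by
    refine le_antisymm (natDegree_le_iff_coeff_eq_zero.mpr Qa) (le_natDegree_of_ne_zero ?_)
    rw [Qb]; exact pow_ne_zero _ X_ne_zero
  have hM : ∀ i, (Polynomial.X ^ (k*p) * Polynomial.C (X ^ (k*q)) : Polynomial (Polynomial F)).coeff i
      = if i = k*p then X ^ (k*q) else 0 := by
    intro i; rw [mul_comm, coeff_C_mul_X_pow]
  have hQk_top : (Q ^ k).coeff (k*p) = X ^ (k*q) := by
    have := coeff_pow_mul_natDegree Q k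
    rw [hQdeg, leadingCoeff, hQdeg, Qb, ← pow_mul, mul_comm q k] at this
    exact this
  have corner : ∀ i j, k*p - p ≤ i → k*q - q ≤ j →
      ((P + Polynomial.X ^ (k*p) * Polynomial.C (X ^ (k*q)) - Q ^ k).coeff i).coeff j = 0 := by
    intro i j hi hj
    rw [coeff_sub, coeff_add, coeff_sub, coeff_add, hM]
    rcases lt_trichotomy i (k*p) with hilt | rfl | higt
    · set s := k*p - i with hs
      have hs1 : 1 ≤ s := by omega
      have hs2 : s ≤ p := by omega
      have hi' : i = k*p - s := by omega
      rw [if_neg (by omega), coeff_zero, add_zero, hi',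
        Qd s hs1 hs2 j (by omega), sub_self]
    · rw [if_pos rfl, hPx _ le_rfl, coeff_zero, zero_add, hQk_top, sub_self]
    · rw [if_neg (by omega), coeff_zero, add_zero, hPx _ (by omega), coeff_zero]
      have : (Q ^ k).coeff i = 0 := by
        apply coeff_eq_zero_of_natDegree_lt
        exact lt_of_le_of_lt (natDegree_pow_le.trans (by rw [hQdeg])) higt
      rw [this, coeff_zero, sub_self]
  refine ⟨Q, ⟨Qc, Qb, Qa, corner⟩, ?_⟩
  rintro Q' ⟨c1, c2, c3, c4⟩
  have key : ∀ t, t ≤ p → ∀ a, p - t ≤ a → Q'.coeff a = Q.coeff a := by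
    intro t
    induction t with
    | zero =>
      intro _ a ha
      rcases eq_or_lt_of_le (by omega : p ≤ a) with rfl | hlt
      · rw [c2, Qb]
      · rw [c3 a hlt, Qa a hlt]
    | succ t iht =>
      intro htp a ha
      rcases le_or_gt (p - t) a with h' | h'
      · exact iht (by omega) a h'
      have haa : a = p - (t+1) := by omega
      subst haa
      have hstep := step (F := F) hk (by omega : 1 ≤ t+1) htp
        (Q₁ := Q) (Q₂ := Q') Qa Qb
        (fun b hb => iht (by omega) b (by omega))
      have hagree : ∀ j, (k-1)*q ≤ j →
          ((Q' ^ k).coeff (k*p - (t+1))).coeff j = ((Q ^ k).coeff (k*p - (t+1))).coeff j := by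
        intro j hj
        have e1 := c4 (k*p-(t+1)) j (by omega) (by omega)
        have e2 := corner (k*p-(t+1)) j (by omega) (by omega)
        rw [coeff_sub, coeff_sub] at e1 e2
        have e1' := sub_eq_zero.mp e1
        have e2' := sub_eq_zero.mp e2
        rw [← e1', ← e2']
      have hΔ0 : Q'.coeff (p-(t+1)) - Q.coeff (p-(t+1)) = 0 := by
        apply Polynomial.ext
        intro s
        have hag := hagree (s + (k-1)*q) (by omega)
        rw [hstep, coeff_add, add_eq_left] at hag
        rw [coeff_mul_X_pow', if_pos (by omega : (k-1)*q ≤ s + (k-1)*q)] at hag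
        rw [show s + (k-1)*q - (k-1)*q = s by omega, ← Polynomial.C_eq_natCast, coeff_C_mul] at hag
        rcases mul_eq_zero.mp hag with h | h
        · exact absurd h hchar
        · rw [h, coeff_zero]
      have := sub_eq_zero.mp hΔ0
      rw [this]
  apply Polynomial.ext
  intro a
  exact key p le_rfl a (by omega)

/-- one-variable collapse -/
noncomputable def θ (F : Type*) [Field F] : MvPolynomial (Fin 1) F ≃ₐ[F] Polynomial F :=
  (MvPolynomial.finSuccEquiv F 0).trans (Polynomial.mapAlgEquiv (MvPolynomial.isEmptyAlgEquiv F (Fin 0)))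

noncomputable def ψ (F : Type*) [Field F] : MvPolynomial (Fin 2) F ≃ₐ[F] Polynomial (Polynomial F) :=
  (MvPolynomial.finSuccEquiv F 1).trans (Polynomial.mapAlgEquiv (θ F))

lemma isEmpty_eq_coeff (g : MvPolynomial (Fin 0) F) :
    (MvPolynomial.isEmptyAlgEquiv F (Fin 0)) g = MvPolynomial.coeff 0 g := by
  conv_lhs => rw [MvPolynomial.eq_C_of_isEmpty g]
  rw [show (MvPolynomial.C : F →+* MvPolynomial (Fin 0) F) = algebraMap F _ from rfl]
  rw [AlgEquiv.commutes]
  simp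

lemma θ_coeff (g : MvPolynomial (Fin 1) F) (j : ℕ) :
    (θ F g).coeff j = MvPolynomial.coeff (Finsupp.single 0 j) g := by
  rw [θ]
  simp only [AlgEquiv.trans_apply, Polynomial.coe_mapAlgEquiv, Polynomial.coeff_map,
    RingHom.coe_coe]
  rw [isEmpty_eq_coeff, MvPolynomial.finSuccEquiv_coeff_coeff]
  congr 1
  ext a
  fin_cases a
  simp [Finsupp.cons_zero]

lemma ψ_coeff (P : MvPolynomial (Fin 2) F) (i j : ℕ) :
    ((ψ F P).coeff i).coeff j
      = MvPolynomial.coeff (Finsupp.single 0 i + Finsupp.single 1 j) P := by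
  rw [ψ]
  simp only [AlgEquiv.trans_apply, Polynomial.coe_mapAlgEquiv, Polynomial.coeff_map,
    RingHom.coe_coe]
  rw [θ_coeff, MvPolynomial.finSuccEquiv_coeff_coeff]
  congr 1
  ext a
  refine Fin.cases ?_ (fun b => ?_) a
  · simp [Finsupp.cons_zero, Finsupp.single_apply]
  · have hb : b = 0 := Subsingleton.elim _ _
    subst hb
    rw [Finsupp.cons_succ]
    simp [Finsupp.single_apply, show ((0:Fin 1).succ) = 1 from rfl]

lemma fin2_eq (m : Fin 2 →₀ ℕ) : m = Finsupp.single 0 (m 0) + Finsupp.single 1 (m 1) := by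
  ext a
  fin_cases a <;> simp [Finsupp.single_apply]

lemma fin2_sum (m : Fin 2 →₀ ℕ) : (m.sum fun _ e => e) = m 0 + m 1 := by
  rw [Finsupp.sum_fintype _ _ (fun _ => rfl), Fin.sum_univ_two]

lemma fin2_apply_zero (i j : ℕ) : (Finsupp.single 0 i + Finsupp.single 1 j : Fin 2 →₀ ℕ) 0 = i := by
  simp [Finsupp.single_apply]

lemma fin2_apply_one (i j : ℕ) : (Finsupp.single 0 i + Finsupp.single 1 j : Fin 2 →₀ ℕ) 1 = j := by
  simp [Finsupp.single_apply]

lemma ψ_X0 : ψ F (MvPolynomial.X 0) = Polynomial.X := by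
  rw [ψ]
  simp [MvPolynomial.finSuccEquiv_X_zero]

lemma ψ_X1 : ψ F (MvPolynomial.X 1) = Polynomial.C Polynomial.X := by
  rw [ψ]
  have h1 : (1 : Fin 2) = (0 : Fin 1).succ := rfl
  simp only [AlgEquiv.trans_apply, h1, MvPolynomial.finSuccEquiv_X_succ,
    Polynomial.coe_mapAlgEquiv, Polynomial.map_C]
  congr 1
  rw [θ]
  simp [MvPolynomial.finSuccEquiv_X_zero]


end ApproxRoot

open MvPolynomial ApproxRoot in
/-- Approximate `k`-th root in two variables: for `P` with `deg P ≤ d = m + n`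
and `deg_x P < m` (with `k ∣ m`, `k ∣ n`), there is a unique `Q`, monic in `x`
with `deg_x Q = m/k` and `deg Q ≤ d/k`, such that `P + x^m y^n - Q^k` has no
monomial `x^i y^j` with `i ≥ m - m/k` and `j ≥ n - n/k`. -/
theorem approximate_root (F : Type*) [Field F] (k m n d : ℕ) (hk : 2 ≤ k)
    (hchar : (k : F) ≠ 0) (hm : 0 < m) (hn : 0 < n) (hd : d = m + n)
    (hkm : k ∣ m) (hkn : k ∣ n)
    (P : MvPolynomial (Fin 2) F) (hPdeg : P.totalDegree ≤ d)
    (hPx : MvPolynomial.degreeOf 0 P < m) :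
    ∃! Q : MvPolynomial (Fin 2) F,
      Q.totalDegree ≤ d / k ∧
      MvPolynomial.degreeOf 0 Q = m / k ∧
      (∀ j : ℕ, MvPolynomial.coeff (Finsupp.single 0 (m / k) + Finsupp.single 1 j) Q =
        if j = n / k then 1 else 0) ∧
      (∀ i j : ℕ, m - m / k ≤ i → n - n / k ≤ j →
        MvPolynomial.coeff (Finsupp.single 0 i + Finsupp.single 1 j)
          (P + X 0 ^ m * X 1 ^ n - Q ^ k) = 0) := by
  classical
  have hk0 : 0 < k := by omega
  obtain ⟨p, hmp⟩ := hkm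
  obtain ⟨q, hnq⟩ := hkn
  have hpq : m / k = p := by rw [hmp, Nat.mul_div_cancel_left _ hk0]
  have hqq : n / k = q := by rw [hnq, Nat.mul_div_cancel_left _ hk0]
  have hdq : d / k = p + q := by
    rw [hd, hmp, hnq, ← Nat.mul_add, Nat.mul_div_cancel_left _ hk0]
  have hp1 : 0 < p := by
    rcases Nat.eq_zero_or_pos p with h|h
    · subst h; simp at hmp; omega
    · exact h
  have hq1 : 0 < q := by
    rcases Nat.eq_zero_or_pos q with h|h
    · subst h; simp at hnq; omega
    · exact h
  set PR := ψ F P with hPR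
  have hPx' : ∀ i, k*p ≤ i → PR.coeff i = 0 := by
    intro i hi
    apply Polynomial.ext; intro j
    rw [hPR, ψ_coeff, Polynomial.coeff_zero]
    by_contra hne
    have hmem := MvPolynomial.mem_support_iff.mpr hne
    have h2 := (MvPolynomial.degreeOf_lt_iff (by omega : 0 < m)).mp hPx _ hmem
    rw [fin2_apply_zero] at h2
    omega
  have hPd' : ∀ i j, k*(p+q) < i + j → (PR.coeff i).coeff j = 0 := by
    intro i j hij
    rw [hPR, ψ_coeff]
    by_contra hne
    have hmem := MvPolynomial.mem_support_iff.mpr hne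
    have h2 := MvPolynomial.le_totalDegree hmem
    rw [fin2_sum, fin2_apply_zero, fin2_apply_one] at h2
    have h3 : i + j ≤ d := le_trans h2 hPdeg
    have h4 : k * (p+q) = m + n := by rw [hmp, hnq]; ring
    omega
  obtain ⟨QR, ⟨r1, r2, r3, r4⟩, runiq⟩ := aux k p q hk hchar PR hPx' hPd'
  have hψM : ψ F (MvPolynomial.X (0 : Fin 2) ^ m * MvPolynomial.X 1 ^ n)
      = Polynomial.X ^ (k*p) * Polynomial.C (Polynomial.X ^ (k*q)) := by
    rw [map_mul, map_pow, map_pow, ψ_X0, ψ_X1, ← Polynomial.C_pow, hmp, hnq]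
  refine ⟨(ψ F).symm QR, ⟨?_, ?_, ?_, ?_⟩, ?_⟩
  case _ => -- totalDegree
    set Q := (ψ F).symm QR with hQdef
    have hQψ : ψ F Q = QR := (ψ F).apply_symm_apply QR
    have hcoeffQ : ∀ i j, MvPolynomial.coeff (Finsupp.single 0 i + Finsupp.single 1 j) Q
        = (QR.coeff i).coeff j := by
      intro i j; rw [← ψ_coeff, hQψ]
    rw [hdq]
    unfold MvPolynomial.totalDegree
    apply Finset.sup_le
    intro mon hmon
    rw [fin2_sum]
    by_contra hgt
    have hne := MvPolynomial.mem_support_iff.mp hmon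
    rw [fin2_eq mon, hcoeffQ] at hne
    exact hne (r1 _ _ (by omega))
  case _ => -- degreeOf
    set Q := (ψ F).symm QR with hQdef
    have hQψ : ψ F Q = QR := (ψ F).apply_symm_apply QR
    have hcoeffQ : ∀ i j, MvPolynomial.coeff (Finsupp.single 0 i + Finsupp.single 1 j) Q
        = (QR.coeff i).coeff j := by
      intro i j; rw [← ψ_coeff, hQψ]
    rw [hpq]
    refine le_antisymm (MvPolynomial.degreeOf_le_iff.mpr ?_) ?_
    · intro mon hmon
      by_contra hgt
      have hne := MvPolynomial.mem_support_iff.mp hmon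
      rw [fin2_eq mon, hcoeffQ, r3 _ (by omega), Polynomial.coeff_zero] at hne
      exact hne rfl
    · have hmem : (Finsupp.single 0 p + Finsupp.single 1 q : Fin 2 →₀ ℕ) ∈ Q.support := by
        rw [MvPolynomial.mem_support_iff, hcoeffQ, r2, Polynomial.coeff_X_pow, if_pos rfl]
        exact one_ne_zero
      have := Finset.le_sup (f := fun (s : Fin 2 →₀ ℕ) => s 0) hmem
      simp only [fin2_apply_zero] at this
      rw [MvPolynomial.degreeOf_eq_sup]
      exact this
  case _ => -- leading coefficients
    intro j
    rw [hpq, hqq, ← ψ_coeff, (ψ F).apply_symm_apply, r2, Polynomial.coeff_X_pow]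
  case _ => -- corner
    intro i j hi hj
    rw [hpq] at hi; rw [hqq] at hj
    rw [← ψ_coeff, map_sub, map_add, map_pow, (ψ F).apply_symm_apply, hψM]
    rw [← hPR]
    exact r4 i j (by omega) (by omega)
  -- uniqueness
  intro Q2 ⟨u1, u2, u3, u4⟩
  have hZ : ψ F Q2 = QR := by
    apply runiq
    refine ⟨?_, ?_, ?_, ?_⟩
    · intro i j hij
      rw [ψ_coeff]
      by_contra hne
      have hmem := MvPolynomial.mem_support_iff.mpr hne
      have h2 := MvPolynomial.le_totalDegree hmem
      rw [fin2_sum, fin2_apply_zero, fin2_apply_one] at h2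
      have h3 := le_trans h2 u1
      omega
    · apply Polynomial.ext; intro j
      rw [ψ_coeff, show p = m / k from hpq.symm, u3 j, hqq, Polynomial.coeff_X_pow]
    · intro i hi
      apply Polynomial.ext; intro j
      rw [ψ_coeff, Polynomial.coeff_zero]
      by_contra hne
      have hmem := MvPolynomial.mem_support_iff.mpr hne
      have h2 := MvPolynomial.degreeOf_le_iff.mp (le_of_eq u2) _ hmem
      rw [fin2_apply_zero, hpq] at h2
      omega
    · intro i j hi hj
      have e : PR + Polynomial.X ^ (k*p) * Polynomial.C (Polynomial.X ^ (k*q)) - (ψ F Q2) ^ k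
          = ψ F (P + MvPolynomial.X 0 ^ m * MvPolynomial.X 1 ^ n - Q2 ^ k) := by
        have e2 : ψ F (Q2^k) = (ψ F Q2)^k := map_pow _ _ _
        rw [map_sub, map_add, hψM, hPR, e2]
      rw [e, ψ_coeff]
      exact u4 i j (by omega) (by omega)
  rw [← hZ, AlgEquiv.symm_apply_apply]
end

section
/- Let F be a field whose characteristic does not divide k, and suppose a₀(y),…,a_ℓ(y) ∈ F[y] satisfy a₀ = y^n and deg aᵢ ≤ n + i, with y-adic valuation val aᵢ ≥ n − n/k (where k | n). Then the triangular system a_ℓ ≡ k b₀^{k−1} b_ℓ + ∑_{i₁+2i₂+⋯+(ℓ−1)i_{ℓ−1}=ℓ, i₀+⋯+i_{ℓ−1}=k} C(k; i₁,…,i_{ℓ−1}) b₀^{i₀}⋯b_{ℓ−1}^{i_{ℓ−1}} modulo polynomials of degree < n − n/k, has a unique solution (b₀,…,b_ℓ) in F[y] with b₀ = y^{n/k} and deg bᵢ ≤ n/k + i. -/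
open Polynomial

open Finset

namespace TS
variable {F : Type*} [Field F]

noncomputable def shiftDown (m : ℕ) (p : Polynomial F) : Polynomial F := Polynomial.divX^[m] p

lemma coeff_shiftDown (m : ℕ) (p : Polynomial F) (d : ℕ) :
    (shiftDown m p).coeff d = p.coeff (d + m) := by
  induction m generalizing p with
  | zero => simp [shiftDown]
  | succ m ih =>
      rw [shiftDown, Function.iterate_succ_apply, ← shiftDown, ih, coeff_divX]
      congr 1

lemma natDegree_shiftDown_le (m N : ℕ) (p : Polynomial F) (h : p.natDegree ≤ m + N) :
    (shiftDown m p).natDegree ≤ N := by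
  rw [natDegree_le_iff_coeff_eq_zero]
  intro d hd
  rw [coeff_shiftDown]
  apply coeff_eq_zero_of_natDegree_lt
  omega

noncomputable def Ssum (k t : ℕ) (B : Fin t → Polynomial F) : Polynomial F :=
  ∑ i ∈ Finset.univ.filter (fun i : Fin t → Fin (k + 1) =>
      (∑ r, (i r).val) = k ∧ (∑ r, r.val * (i r).val) = t),
    (Nat.multinomial Finset.univ (fun r => (i r).val) : Polynomial F) *
      ∏ r : Fin t, B r ^ (i r).val

noncomputable def Bfun (k n ℓ : ℕ) (a : Fin (ℓ + 1) → Polynomial F) : ℕ → Polynomial F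
  | 0 => X ^ (n / k)
  | (t + 1) =>
      (k : F)⁻¹ • shiftDown (n - n / k)
        ((if _ : t + 1 ≤ ℓ then a ⟨t + 1, by omega⟩ else 0) -
          Ssum k (t + 1) (fun r => Bfun k n ℓ a r))
  decreasing_by exact r.isLt

lemma Ssum_natDegree_le (k n t : ℕ) (hkn : k ∣ n) (B : Fin t → Polynomial F)
    (hB : ∀ r : Fin t, (B r).natDegree ≤ n / k + r.val) :
    (Ssum k t B).natDegree ≤ n + t := by
  apply natDegree_sum_le_of_forall_le
  intro i hi
  rw [Finset.mem_filter] at hi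
  obtain ⟨-, h1, h2⟩ := hi
  calc ((Nat.multinomial Finset.univ (fun r => (i r).val) : Polynomial F) *
      ∏ r : Fin t, B r ^ (i r).val).natDegree
      ≤ (Nat.multinomial Finset.univ (fun r => (i r).val) : Polynomial F).natDegree
        + (∏ r : Fin t, B r ^ (i r).val).natDegree := natDegree_mul_le
    _ ≤ 0 + ∑ r : Fin t, (B r ^ (i r).val).natDegree := by
        gcongr
        · exact le_of_eq (natDegree_natCast _)
        · exact natDegree_prod_le _ _
    _ ≤ ∑ r : Fin t, (i r).val * (n / k + r.val) := by
        rw [zero_add]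
        apply Finset.sum_le_sum
        intro r _
        exact le_trans (natDegree_pow_le) (Nat.mul_le_mul_left _ (hB r))
    _ = (∑ r : Fin t, (i r).val) * (n / k) + ∑ r : Fin t, r.val * (i r).val := by
        rw [Finset.sum_mul]
        rw [← Finset.sum_add_distrib]
        apply Finset.sum_congr rfl
        intro r _
        ring
    _ = n + t := by
        rw [h1, h2, Nat.mul_div_cancel' hkn]

lemma Bfun_natDegree_le (k n ℓ : ℕ) (hkn : k ∣ n) (a : Fin (ℓ + 1) → Polynomial F)
    (hadeg : ∀ i : Fin (ℓ + 1), (a i).natDegree ≤ n + i.val) :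
    ∀ t, (Bfun k n ℓ a t).natDegree ≤ n / k + t := by
  intro t
  induction t using Nat.strong_induction_on with
  | _ t ih =>
    match t with
    | 0 => simpa [Bfun] using natDegree_X_pow_le (R := F) (n / k)
    | (t + 1) =>
      rw [Bfun]
      refine le_trans (natDegree_smul_le _ _) ?_
      apply natDegree_shiftDown_le
      have hq : n / k ≤ n := Nat.div_le_self n k
      have h1 : ((if _ : t + 1 ≤ ℓ then a ⟨t + 1, by omega⟩ else 0 : Polynomial F)).natDegree
          ≤ n + (t + 1) := by
        split
        · exact hadeg _
        · simp
      have h2 : (Ssum k (t + 1) (fun r : Fin (t + 1) => Bfun k n ℓ a r.val)).natDegree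
          ≤ n + (t + 1) :=
        Ssum_natDegree_le k n (t + 1) hkn _ (fun r => ih r.val r.isLt)
      have := natDegree_sub_le_of_le h1 h2
      omega

lemma Bfun_coeff (k n ℓ : ℕ) (hchar : (k : F) ≠ 0) (a : Fin (ℓ + 1) → Polynomial F)
    (t : ℕ) (ht : t + 1 ≤ ℓ) (d : ℕ) :
    (k : F) * (Bfun k n ℓ a (t + 1)).coeff d =
      (a ⟨t + 1, by omega⟩ -
        Ssum k (t + 1) (fun r : Fin (t + 1) => Bfun k n ℓ a r.val)).coeff (d + (n - n / k)) := by
  rw [Bfun, coeff_smul, smul_eq_mul, ← mul_assoc, mul_inv_cancel₀ hchar, one_mul,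
    coeff_shiftDown, dif_pos ht]

lemma pow_nk (k n : ℕ) (hkn : k ∣ n) (hk : 2 ≤ k) :
    ((X : Polynomial F) ^ (n / k)) ^ (k - 1) = X ^ (n - n / k) := by
  rw [← pow_mul]
  congr 1
  have hq : n / k * k = n := Nat.div_mul_cancel hkn
  have hk1 : k - 1 + 1 = k := by omega
  have h2 : n / k * (k - 1) + n / k * 1 = n / k * (k - 1 + 1) := (mul_add _ _ _).symm
  rw [hk1, mul_one] at h2
  omega

lemma coeff_k_mul (k n : ℕ) (hkn : k ∣ n) (hk : 2 ≤ k) (p : Polynomial F) (d : ℕ) :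
    ((k : Polynomial F) * ((X : Polynomial F) ^ (n / k)) ^ (k - 1) * p).coeff (d + (n - n / k))
      = (k : F) * p.coeff d := by
  rw [pow_nk k n hkn hk,
    show (k : Polynomial F) * X ^ (n - n / k) * p = X ^ (n - n / k) * ((k : Polynomial F) * p)
      from by ring,
    coeff_X_pow_mul, ← Polynomial.C_eq_natCast, coeff_C_mul]

lemma key_coeff (k n ℓ : ℕ) (hchar : (k : F) ≠ 0) (hkn : k ∣ n) (hk : 2 ≤ k)
    (a : Fin (ℓ + 1) → Polynomial F) (s : ℕ) (hs : s + 1 ≤ ℓ) (j : ℕ) (hj : n - n / k ≤ j) :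
    (a ⟨s + 1, by omega⟩ -
      ((k : Polynomial F) * ((X : Polynomial F) ^ (n / k)) ^ (k - 1) * Bfun k n ℓ a (s + 1) +
        Ssum k (s + 1) (fun r : Fin (s + 1) => Bfun k n ℓ a r.val))).coeff j = 0 := by
  have hjm : j - (n - n / k) + (n - n / k) = j := by omega
  rw [coeff_sub, coeff_add, ← hjm, coeff_k_mul k n hkn hk,
    Bfun_coeff k n ℓ hchar a s hs (j - (n - n / k)), coeff_sub]
  ring

end TS

open TS

/-- The triangular system `a_t ≡ k b₀^{k-1} b_t + ∑ C(k;i) b₀^{i₀}⋯b_{t-1}^{i_{t-1}}`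
(modulo polynomials of degree `< n - n/k`) has a unique solution
`(b₀,…,b_ℓ)` with `b₀ = y^{n/k}` and `deg bᵢ ≤ n/k + i`. -/
theorem triangular_system_unique_solution (F : Type*) [Field F] (k n ℓ : ℕ)
    (hk : 2 ≤ k) (hchar : (k : F) ≠ 0) (hkn : k ∣ n) (hn : 0 < n)
    (a : Fin (ℓ + 1) → Polynomial F)
    (ha0 : a 0 = Polynomial.X ^ n)
    (hadeg : ∀ i : Fin (ℓ + 1), (a i).natDegree ≤ n + i.val)
    (haval : ∀ i : Fin (ℓ + 1), ∀ j : ℕ, j < n - n / k → (a i).coeff j = 0) :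
    ∃! b : Fin (ℓ + 1) → Polynomial F,
      b 0 = Polynomial.X ^ (n / k) ∧
      (∀ i : Fin (ℓ + 1), (b i).natDegree ≤ n / k + i.val) ∧
      (∀ t : Fin (ℓ + 1), 0 < t.val → ∀ j : ℕ, n - n / k ≤ j →
        (a t - ((k : Polynomial F) * b 0 ^ (k - 1) * b t +
          ∑ i ∈ Finset.univ.filter (fun i : Fin t.val → Fin (k + 1) =>
              (∑ r, (i r).val) = k ∧ (∑ r, r.val * (i r).val) = t.val),
            (Nat.multinomial Finset.univ (fun r => (i r).val) : Polynomial F) *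
              ∏ r : Fin t.val, b (Fin.castLE (Nat.le_of_lt t.isLt) r) ^ (i r).val)).coeff j
          = 0) := by
  set b : Fin (ℓ + 1) → Polynomial F := fun i => Bfun k n ℓ a i.val with hbdef
  have hb0 : b 0 = Polynomial.X ^ (n / k) := by
    simp only [hbdef, Fin.val_zero]
    rw [Bfun]
  refine ⟨b, ⟨hb0, fun i => Bfun_natDegree_le k n ℓ hkn a hadeg i.val, ?_⟩, ?_⟩
  · rintro ⟨tv, hlt⟩ ht j hj
    have ht' : 0 < tv := ht
    obtain ⟨s, rfl⟩ : ∃ s, tv = s + 1 := ⟨tv - 1, by omega⟩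
    rw [show b 0 = Polynomial.X ^ (n / k) from hb0]
    exact key_coeff k n ℓ hchar hkn hk a s (by omega : s + 1 ≤ ℓ) j hj
  · rintro b' ⟨h0, hdeg', hcong⟩
    have main : ∀ v, ∀ (hv : v < ℓ + 1), b' ⟨v, hv⟩ = Bfun k n ℓ a v := by
      intro v
      induction v using Nat.strong_induction_on with
      | _ v ih =>
        intro hv
        match v with
        | 0 =>
          rw [Bfun]
          exact h0
        | (s + 1) =>
          have hE : ∀ j : ℕ, n - n / k ≤ j →
              (a ⟨s + 1, hv⟩ - ((k : Polynomial F) * b' 0 ^ (k - 1) * b' ⟨s + 1, hv⟩ +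
                Ssum k (s + 1) (fun r : Fin (s + 1) => b' ⟨r.val, by omega⟩))).coeff j = 0 :=
            hcong ⟨s + 1, hv⟩ (Nat.succ_pos s)
          have hfun : (fun r : Fin (s + 1) => b' ⟨r.val, by omega⟩)
              = (fun r : Fin (s + 1) => Bfun k n ℓ a r.val) :=
            funext fun r => ih r.val r.isLt _
          rw [hfun, h0] at hE
          ext d
          apply mul_left_cancel₀ hchar
          rw [Bfun_coeff k n ℓ hchar a s (by omega) d]
          have hE2 := hE (d + (n - n / k)) (by omega)
          rw [coeff_sub, coeff_add, coeff_k_mul k n hkn hk] at hE2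
          rw [coeff_sub]
          linear_combination -hE2
    funext i
    obtain ⟨v, hv⟩ := i
    exact main v hv
end

section
/- Define m₀ = k⌈d/k⌉ and m_{i+1} = (k−1)⌈mᵢ/k⌉ for i ≥ 0, where k ≥ 2 and d ≥ 1 are integers. Then for all i, mᵢ ≤ (d+k)e^{−i/k} + k(k−1); in particular, for any integer ℓ ≥ k·ln(d/k + 1), one has m_ℓ ≤ k². -/
/-- For the recursion `m₀ = k⌈d/k⌉`, `m_{i+1} = (k-1)⌈mᵢ/k⌉`, one has
`mᵢ ≤ (d+k)e^{-i/k} + k(k-1)`; in particular `m_ℓ ≤ k²` whenever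
`ℓ ≥ k·ln(d/k + 1)`. -/
theorem degree_recursion_bound (k d : ℕ) (hk : 2 ≤ k) (hd : 1 ≤ d)
    (m : ℕ → ℕ) (h0 : m 0 = k * ((d + k - 1) / k))
    (hrec : ∀ i, m (i + 1) = (k - 1) * ((m i + k - 1) / k)) :
    (∀ i : ℕ, (m i : ℝ) ≤ (d + k : ℝ) * Real.exp (-(i : ℝ) / k) + k * (k - 1)) ∧
    (∀ ℓ : ℕ, (k : ℝ) * Real.log ((d : ℝ) / k + 1) ≤ (ℓ : ℝ) → m ℓ ≤ k ^ 2) := by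
  have hkR : (2:ℝ) ≤ (k:ℝ) := by exact_mod_cast hk
  have hkpos : (0:ℝ) < (k:ℝ) := by linarith
  have hdR : (1:ℝ) ≤ (d:ℝ) := by exact_mod_cast hd
  have hAnn : (0:ℝ) ≤ (d:ℝ) + k := by linarith
  have hk1 : (1:ℕ) ≤ k := by omega
  have hexp1 : (1 - 1/(k:ℝ)) ≤ Real.exp (-(1/(k:ℝ))) := by
    have := Real.add_one_le_exp (-(1/(k:ℝ)))
    linarith
  have main : ∀ i : ℕ, (m i : ℝ) ≤ (d + k : ℝ) * Real.exp (-(i : ℝ) / k) + k * (k - 1) := by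
    intro i
    induction i with
    | zero =>
      have h1 : m 0 ≤ d + k := by
        rw [h0, mul_comm]
        have := Nat.div_mul_le_self (d + k - 1) k
        omega
      have h1R : (m 0 : ℝ) ≤ (d:ℝ) + k := by exact_mod_cast h1
      simp only [Nat.cast_zero, neg_zero, zero_div, Real.exp_zero, mul_one]
      nlinarith
    | succ i ih =>
      have hstep : (m (i+1) : ℝ) ≤ (1 - 1/(k:ℝ)) * m i + ((k:ℝ) - 1) := by
        have heq : m (i+1) = (k - 1) * ((m i + (k - 1)) / k) := by
          rw [hrec]; congr 2; omega
        have hdiv : (((m i + (k-1)) / k : ℕ) : ℝ) ≤ ((m i : ℝ) + ((k:ℝ) - 1)) / k := by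
          have h := Nat.cast_div_le (α := ℝ) (m := m i + (k-1)) (n := k)
          have hc : ((m i + (k - 1) : ℕ) : ℝ) = (m i : ℝ) + ((k:ℝ) - 1) := by
            push_cast [Nat.cast_sub hk1]; ring
          rw [hc] at h; exact h
        have hcast : ((k - 1 : ℕ) : ℝ) = (k:ℝ) - 1 := by
          push_cast [Nat.cast_sub hk1]; ring
        have h2 : (m (i+1) : ℝ) ≤ ((k:ℝ) - 1) * (((m i : ℝ) + ((k:ℝ) - 1)) / k) := by
          rw [heq]
          push_cast [Nat.cast_sub hk1]
          have hnn : (0:ℝ) ≤ (k:ℝ) - 1 := by linarith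
          exact mul_le_mul_of_nonneg_left hdiv hnn
        have hid : ((k:ℝ)-1) * (((m i : ℝ) + ((k:ℝ)-1))/k)
            = (1 - 1/(k:ℝ)) * ((m i:ℝ) + ((k:ℝ)-1)) := by
          field_simp
        have h3 : ((k:ℝ) - 1) * (((m i : ℝ) + ((k:ℝ) - 1)) / k)
            ≤ (1 - 1/(k:ℝ)) * m i + ((k:ℝ) - 1) := by
          rw [hid]
          nlinarith [mul_nonneg (by positivity : (0:ℝ) ≤ 1/(k:ℝ))
            (by linarith : (0:ℝ) ≤ (k:ℝ)-1)]
        linarith [h3]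
      have hE : (0:ℝ) < Real.exp (-(i:ℝ)/k) := Real.exp_pos _
      have hm0 : (0:ℝ) ≤ (m i : ℝ) := Nat.cast_nonneg _
      have hfrac : (0:ℝ) ≤ 1 - 1/(k:ℝ) := by
        have : 1/(k:ℝ) ≤ 1/2 := by
          apply one_div_le_one_div_of_le <;> linarith
        linarith
      have h4 : (1 - 1/(k:ℝ)) * (m i : ℝ) + ((k:ℝ) - 1)
          ≤ (1 - 1/(k:ℝ)) * (((d:ℝ)+k) * Real.exp (-(i:ℝ)/k) + k*((k:ℝ)-1)) + ((k:ℝ)-1) := by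
        nlinarith [mul_le_mul_of_nonneg_left ih hfrac]
      have h5 : (1 - 1/(k:ℝ)) * (((d:ℝ)+k) * Real.exp (-(i:ℝ)/k) + k*((k:ℝ)-1)) + ((k:ℝ)-1)
          = ((d:ℝ)+k) * Real.exp (-(i:ℝ)/k) * (1 - 1/(k:ℝ)) + (k:ℝ)*((k:ℝ)-1) := by
        field_simp; ring
      have h6 : ((d:ℝ)+k) * Real.exp (-(i:ℝ)/k) * (1 - 1/(k:ℝ))
          ≤ ((d:ℝ)+k) * (Real.exp (-(i:ℝ)/k) * Real.exp (-(1/(k:ℝ)))) := by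
        nlinarith [mul_le_mul_of_nonneg_left hexp1 (le_of_lt hE)]
      have h7 : Real.exp (-(i:ℝ)/k) * Real.exp (-(1/(k:ℝ)))
          = Real.exp (-((i+1:ℕ):ℝ)/k) := by
        rw [← Real.exp_add]; congr 1; push_cast; ring
      calc (m (i+1) : ℝ) ≤ (1 - 1/(k:ℝ)) * m i + ((k:ℝ) - 1) := hstep
        _ ≤ _ := h4
        _ = ((d:ℝ)+k) * Real.exp (-(i:ℝ)/k) * (1 - 1/(k:ℝ)) + (k:ℝ)*((k:ℝ)-1) := h5
        _ ≤ ((d:ℝ)+k) * (Real.exp (-(i:ℝ)/k) * Real.exp (-(1/(k:ℝ)))) + (k:ℝ)*((k:ℝ)-1) := by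
            linarith
        _ = ((d:ℝ)+k) * Real.exp (-((i+1:ℕ):ℝ)/k) + (k:ℝ)*((k:ℝ)-1) := by rw [h7]
  refine ⟨main, ?_⟩
  intro ℓ hℓ
  have h1 := main ℓ
  have hpos : (0:ℝ) < (d:ℝ)/k + 1 := by positivity
  have hlog : Real.log ((d:ℝ)/k + 1) ≤ (ℓ:ℝ)/k := by
    rw [le_div_iff₀ hkpos]
    nlinarith
  have h2 : Real.exp (-(ℓ:ℝ)/k) ≤ (k:ℝ)/((d:ℝ)+k) := by
    have hmono : Real.exp (-(ℓ:ℝ)/k) ≤ Real.exp (-Real.log ((d:ℝ)/k + 1)) := by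
      apply Real.exp_le_exp.mpr
      rw [neg_div]
      linarith
    have heq : Real.exp (-Real.log ((d:ℝ)/k + 1)) = (k:ℝ)/((d:ℝ)+k) := by
      rw [Real.exp_neg, Real.exp_log hpos]
      field_simp
    rw [heq] at hmono; exact hmono
  have h3 : ((d:ℝ)+k) * Real.exp (-(ℓ:ℝ)/k) ≤ (k:ℝ) := by
    have h := mul_le_mul_of_nonneg_left h2 hAnn
    have heq : ((d:ℝ)+k) * ((k:ℝ)/((d:ℝ)+k)) = (k:ℝ) := by
      field_simp
    rw [heq] at h; exact h
  have hfin : (m ℓ : ℝ) ≤ (k:ℝ)^2 := by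
    have hsq : (k:ℝ) + (k:ℝ)*((k:ℝ)-1) = (k:ℝ)^2 := by ring
    linarith
  exact_mod_cast hfin
end

section
/- Strict Waring for F[x,y]: Let F be a field with more than k elements, whose characteristic does not divide k, and in which every element is a sum of w k-th powers. Then every polynomial P ∈ F[x,y] of degree d ≥ 2k⁴ can be written P = Q₁^k + ⋯ + Q_s^k with Qᵢ ∈ F[x,y], deg Qᵢ^k ≤ d + k³, and s ≤ 2k³·ln(d/k + 1)·ln(2k) + 7k⁴·ln(k)·w². -/
open MvPolynomial Finset

namespace SWaux

/-- sum-of-k-th-powers predicate with degree bound B -/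
def Rep (F : Type*) [Field F] (k B n : ℕ) (P : MvPolynomial (Fin 2) F) : Prop :=
  ∃ Q : Fin n → MvPolynomial (Fin 2) F, P = ∑ i, Q i ^ k ∧ ∀ i, (Q i ^ k).totalDegree ≤ B

variable {F : Type*} [Field F] {k B : ℕ}

lemma rep_add {n m : ℕ} {P R : MvPolynomial (Fin 2) F}
    (h1 : Rep F k B n P) (h2 : Rep F k B m R) : Rep F k B (n + m) (P + R) := by
  obtain ⟨Q1, hQ1, hd1⟩ := h1
  obtain ⟨Q2, hQ2, hd2⟩ := h2
  refine ⟨Fin.addCases Q1 Q2, ?_, ?_⟩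
  · rw [Fin.sum_univ_add]
    simp only [Fin.addCases_left, Fin.addCases_right]
    rw [hQ1, hQ2]
  · intro i
    refine Fin.addCases (fun i => ?_) (fun i => ?_) i
    · simpa using hd1 i
    · simpa using hd2 i

lemma rep_sum {ι : Type*} [DecidableEq ι] {n : ℕ} (T : Finset ι)
    (f : ι → MvPolynomial (Fin 2) F) (h : ∀ e ∈ T, Rep F k B n (f e)) :
    Rep F k B (T.card * n) (∑ e ∈ T, f e) := by
  induction T using Finset.cons_induction with
  | empty => exact ⟨fun i => 0, by rw [Finset.sum_empty]; exact (Finset.sum_eq_zero fun i _ => absurd i.2 (by simp)).symm, by simp⟩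
  | cons a s hx ih =>
    rw [Finset.sum_cons, Finset.card_cons, add_mul, one_mul, add_comm (s.card * n)]
    exact rep_add (h a (mem_cons_self a s)) (ih fun e he => h e (mem_cons_of_mem he))

end SWaux


namespace SWaux

/-! ### corner combinatorics -/

def DD (k d : ℕ) : ℕ := (d + k^3) / k
def mu (k d : ℕ) : ℕ := DD k d / (2*k - 2)
def Del (k d : ℕ) : ℕ := (k-1) * mu k d
def MM (k d : ℕ) : ℕ := (d - DD k d + (k-2)) / (k-1)
def lev (k d h : ℕ) : ℕ := ((h - DD k d) + (Del k d - 1)) / Del k d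
def mfun (k d h : ℕ) : ℕ := min (mu k d * lev k d h) (MM k d)
def sfun (k d a h : ℕ) : ℕ := min (mu k d * (a / Del k d)) (mfun k d h)

section numeric

variable {k d : ℕ} (hk : 2 ≤ k) (hd : 2*k^4 ≤ d)

include hk hd

lemma hDD1 : k * DD k d ≤ d + k^3 ∧ d + k^3 < k * DD k d + k := by
  have h := Nat.div_add_mod (d + k^3) k
  have h2 : (d + k^3) % k < k := Nat.mod_lt _ (by omega)
  unfold DD
  constructor <;> omega

lemma hDD3 : 2*k^3 + k^2 ≤ DD k d := by
  have h1 := (hDD1 hk hd).2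
  by_contra hcon
  push_neg at hcon
  have hc : DD k d ≤ 2*k^3 + k^2 - 1 := by omega
  have := Nat.mul_le_mul_left k hc
  nlinarith

lemma hmu1 : (2*k-2) * mu k d ≤ DD k d ∧ DD k d < (2*k-2) * mu k d + (2*k-2) := by
  have h := Nat.div_add_mod (DD k d) (2*k-2)
  have h2 : DD k d % (2*k-2) < 2*k-2 := Nat.mod_lt _ (by omega)
  unfold mu
  constructor <;> omega

lemma hmu2 : k^2 ≤ mu k d := by
  have h2 := (hmu1 hk hd).2
  have h3 := hDD3 hk hd
  by_contra hcon
  push_neg at hcon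
  zify [show 2 ≤ 2*k by omega] at h2 h3 hcon
  nlinarith

lemma hDelpos : 0 < Del k d := by
  have := hmu2 hk hd
  have h1 : 0 < k - 1 := by omega
  exact Nat.mul_pos h1 (by nlinarith)

lemma h2Del : 2 * Del k d = (2*k-2) * mu k d := by
  have h2k : 2*(k-1) = 2*k-2 := by omega
  rw [Del, ← mul_assoc, h2k]

lemma hDlt : DD k d < d := by
  have h1 := (hDD1 hk hd).1
  by_contra hcon
  push_neg at hcon
  have := Nat.mul_le_mul_left k hcon
  have h2d : 2*d ≤ k*d := Nat.mul_le_mul_right d hk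
  have hp : k^3 ≤ k^4 := Nat.pow_le_pow_right (by omega) (by norm_num)
  have hp2 : 0 < k^3 := by positivity
  linarith

lemma hMM1 : (k-1) * MM k d ≤ d - DD k d + (k-2) ∧ d - DD k d + (k-2) < (k-1) * MM k d + (k-1) := by
  have h := Nat.div_add_mod (d - DD k d + (k-2)) (k-1)
  have h2 : (d - DD k d + (k-2)) % (k-1) < k-1 := Nat.mod_lt _ (by omega)
  unfold MM
  constructor <;> omega

lemma hMMle : MM k d ≤ DD k d := by
  have h1 := (hDD1 hk hd).2
  have h4 := (hMM1 hk hd).1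
  have h5 := (hDlt hk hd).le
  by_contra hcon
  push_neg at hcon
  have hc : DD k d + 1 ≤ MM k d := hcon
  have hmul := Nat.mul_le_mul_left (k-1) hc
  zify [h5, show 1 ≤ k by omega, show 2 ≤ k by omega] at h1 h4 hmul
  have hkz : (2:ℤ) ≤ (k:ℤ) := by exact_mod_cast hk
  have hp : 2*(k:ℤ) ≤ (k:ℤ)^3 := by nlinarith [mul_le_mul hkz hkz (by norm_num : (0:ℤ) ≤ 2) (by linarith : (0:ℤ) ≤ (k:ℤ)), hkz]
  nlinarith [h1, h4, hmul, hkz, hp]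

lemma hMMge : d - DD k d ≤ (k-1) * MM k d := by
  have h2 := (hMM1 hk hd).2
  omega

lemma hMMmu : MM k d ≤ (2*k-1) * mu k d := by
  have h1 := (hDD1 hk hd).2
  have h2 := (hmu1 hk hd).2
  have h3 := hDD3 hk hd
  have h4 := (hMM1 hk hd).1
  have h5 := (hDlt hk hd).le
  have key : (k-1) * MM k d ≤ (k-1) * ((2*k-1) * mu k d) := by
    zify [h5, show 1 ≤ k by omega, show 2 ≤ k by omega, show 2 ≤ 2*k by omega, show 1 ≤ 2*k by omega] at *
    nlinarith
  exact Nat.le_of_mul_le_mul_left key (by omega : 0 < k-1)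

/-- level bound: `lev h ≤ 2k - 1` for `h ≤ d` -/
lemma hlev_bound {h : ℕ} (hh : h ≤ d) : lev k d h ≤ 2*k-1 := by
  have h1 := (hDD1 hk hd).2
  have h2 := (hmu1 hk hd).2
  have h3 := hDD3 hk hd
  have h5 := (hDlt hk hd).le
  have hDel := hDelpos hk hd
  have h2D := h2Del hk hd
  rw [lev, Nat.div_le_iff_le_mul_add_pred hDel]
  have key : d - DD k d ≤ Del k d * (2*k-1) := by
    zify [h5, show 1 ≤ k by omega, show 2 ≤ k by omega, show 2 ≤ 2*k by omega, show 1 ≤ 2*k by omega] at *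
    nlinarith
  have : h - DD k d ≤ d - DD k d := by omega
  omega

/-- `(k-1) * mfun h + DD ≥ h` for `h ≤ d` -/
lemma hP3 {h : ℕ} (hh : h ≤ d) : h ≤ DD k d + (k-1) * mfun k d h := by
  rcases le_or_gt h (DD k d) with hc | hc
  · omega
  have hDel := hDelpos hk hd
  rcases min_cases (mu k d * lev k d h) (MM k d) with ⟨heq, _⟩ | ⟨heq, _⟩
  · rw [mfun, heq, ← mul_assoc]
    have hDel2 : (k-1) * mu k d = Del k d := rfl
    rw [hDel2]
    have hdm := Nat.div_add_mod ((h - DD k d) + (Del k d - 1)) (Del k d)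
    have hmod : ((h - DD k d) + (Del k d - 1)) % (Del k d) < Del k d := Nat.mod_lt _ hDel
    have : Del k d * lev k d h ≥ h - DD k d := by
      rw [lev]
      omega
    omega
  · rw [mfun, heq]
    have := hMMge hk hd
    omega

/-- `mfun ≤ DD` -/
lemma hP4 {h : ℕ} : mfun k d h ≤ DD k d :=
  le_trans (min_le_right _ _) (hMMle hk hd)

/-- `(k-1) * sfun ≤ a` -/
lemma hP1 {a h : ℕ} : (k-1) * sfun k d a h ≤ a := by
  calc (k-1) * sfun k d a h ≤ (k-1) * (mu k d * (a / Del k d)) :=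
        Nat.mul_le_mul_left _ (min_le_left _ _)
  _ = Del k d * (a / Del k d) := by rw [← mul_assoc]; rfl
  _ ≤ a := Nat.mul_div_le a (Del k d)

/-- `(k-1) * (mfun - sfun) ≤ b` -/
lemma hP2 {a b : ℕ} (hab : a + b ≤ d) :
    (k-1) * (mfun k d (a+b) - sfun k d a (a+b)) ≤ b := by
  have hDel := hDelpos hk hd
  have h2D := h2Del hk hd
  have hmuDD := (hmu1 hk hd).1
  set h := a + b with hh
  rcases le_total (mu k d * (a / Del k d)) (mfun k d h) with hc | hc
  · rw [sfun, min_eq_left hc]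
    rcases le_or_gt h (DD k d) with hsm | hsm
    · have hlev0 : lev k d h = 0 := by
        rw [lev]
        apply Nat.div_eq_of_lt
        omega
      have : mfun k d h = 0 := by
        have : mfun k d h ≤ mu k d * lev k d h := min_le_left _ _
        rw [hlev0] at this
        omega
      rw [this]
      simp
    · rw [Nat.mul_sub, Nat.sub_le_iff_le_add]
      have e1 : (k-1) * (mu k d * (a / Del k d)) = Del k d * (a / Del k d) := by
        rw [← mul_assoc]; rfl
      rw [e1]
      have F1 : (k-1) * mfun k d h ≤ Del k d * lev k d h := by
        calc (k-1) * mfun k d h ≤ (k-1) * (mu k d * lev k d h) :=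
              Nat.mul_le_mul_left _ (min_le_left _ _)
        _ = Del k d * lev k d h := by rw [← mul_assoc]; rfl
      have hdm := Nat.div_add_mod ((h - DD k d) + (Del k d - 1)) (Del k d)
      have F2 : Del k d * lev k d h ≤ (h - DD k d) + (Del k d - 1) := by
        rw [lev]; omega
      have hdm2 := Nat.div_add_mod a (Del k d)
      have hmod2 : a % Del k d < Del k d := Nat.mod_lt _ hDel
      have F3 : a < Del k d * (a / Del k d) + Del k d := by omega
      have F4 : 2 * Del k d ≤ DD k d := by omega
      omega
  · rw [sfun, min_eq_right hc]
    simp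

/-- formula for sfun through a bounded index -/
lemma hPJ {a h : ℕ} (hh : h ≤ d) :
    sfun k d a h = min (mu k d * (min (a / Del k d) (2*k-1))) (mfun k d h) := by
  rcases le_or_gt (a / Del k d) (2*k-1) with hc | hc
  · rw [min_eq_left hc]; rfl
  · have h6 := hMMmu hk hd
    have hmf : mfun k d h ≤ (2*k-1) * mu k d := le_trans (min_le_right _ _) h6
    rw [min_eq_right (le_of_lt hc)]
    rw [sfun, min_eq_right, min_eq_right]
    · rw [mul_comm]; exact hmf
    · calc mfun k d h ≤ (2*k-1) * mu k d := hmf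
      _ ≤ (a / Del k d) * mu k d := Nat.mul_le_mul_right _ (by omega)
      _ = mu k d * (a / Del k d) := mul_comm _ _

end numeric

end SWaux

lemma exists_identity (F : Type*) [Field F] (k : ℕ) (hk : 2 ≤ k)
    (hcard : (k : Cardinal) < Cardinal.mk F) (hchar : (k : F) ≠ 0) :
    ∃ lam c : Fin (k+1) → F, ∀ u v : MvPolynomial (Fin 2) F,
      u * v ^ (k-1) = ∑ i, MvPolynomial.C (lam i) * (u + MvPolynomial.C (c i) * v) ^ k := by
  -- get k+1 distinct elements of F
  have hle : Nonempty (Fin (k+1) ↪ F) := by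
    refine Cardinal.lift_mk_le'.mp ?_
    rw [Cardinal.lift_mk_fin]
    simp only [Cardinal.lift_uzero]
    push_cast
    exact (Cardinal.add_one_le_succ _).trans (Order.succ_le_of_lt hcard)
  obtain ⟨cemb⟩ := hle
  set c : Fin (k+1) → F := ⇑cemb with hc
  -- Vandermonde matrix
  set Vm : Matrix (Fin (k+1)) (Fin (k+1)) F := Matrix.vandermonde c with hVm
  have hdet : Vm.det ≠ 0 := by
    rw [Matrix.det_vandermonde]
    refine Finset.prod_ne_zero_iff.mpr fun i _ => Finset.prod_ne_zero_iff.mpr fun j hj => ?_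
    have : i ≠ j := (Finset.mem_Ioi.mp hj).ne
    exact sub_ne_zero.mpr fun hc => this (cemb.injective hc.symm)
  set e : Fin (k+1) → F := fun j => if (j : ℕ) = k - 1 then (k : F)⁻¹ else 0 with he
  set lam : Fin (k+1) → F := Matrix.vecMul e Vm⁻¹ with hlamdef
  have hsolve : Matrix.vecMul lam Vm = e := by
    rw [hlamdef, Matrix.vecMul_vecMul, Matrix.nonsing_inv_mul _ (isUnit_iff_ne_zero.mpr hdet), Matrix.vecMul_one]
  have hlam : ∀ r : ℕ, r ≤ k → ∑ i, lam i * c i ^ r = if r = k - 1 then (k : F)⁻¹ else 0 := by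
    intro r hr
    have := congrFun hsolve ⟨r, by omega⟩
    simpa [Matrix.vecMul, dotProduct, hVm, Matrix.vandermonde_apply, he] using this
  refine ⟨lam, c, fun u v => ?_⟩
  have expand : ∀ i : Fin (k+1),
      MvPolynomial.C (lam i) * (u + MvPolynomial.C (c i) * v) ^ k
      = ∑ j ∈ Finset.range (k+1),
          MvPolynomial.C (lam i * c i ^ (k - j)) * (u ^ j * v ^ (k - j) * (k.choose j : MvPolynomial (Fin 2) F)) := by
    intro i
    rw [add_pow, Finset.mul_sum]
    refine Finset.sum_congr rfl fun j hj => ?_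
    rw [mul_pow, map_mul, map_pow]
    ring
  calc u * v ^ (k-1)
      = ∑ j ∈ Finset.range (k+1),
          MvPolynomial.C (∑ i : Fin (k+1), lam i * c i ^ (k - j)) * (u ^ j * v ^ (k - j) * (k.choose j : MvPolynomial (Fin 2) F)) := by
        rw [Finset.sum_eq_single 1 ?h₀ ?h₁]
        · rw [hlam (k-1) (by omega), if_pos rfl]
          have : (k.choose 1 : MvPolynomial (Fin 2) F) = MvPolynomial.C (k : F) := by
            rw [Nat.choose_one_right]
            simp [MvPolynomial.C_eq_coe_nat]
          rw [this, pow_one]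
          have h1 : MvPolynomial.C (k : F)⁻¹ * MvPolynomial.C (k : F) = (1 : MvPolynomial (Fin 2) F) := by
            rw [← map_mul, inv_mul_cancel₀ hchar, map_one]
          linear_combination (- (u * v ^ (k-1))) * h1
        case h₀ =>
          intro j hj hne
          rw [hlam (k-j) (by omega), if_neg (by
            intro hc
            have hjk : j ≤ k := by omega
            omega), map_zero, zero_mul]
        case h₁ =>
          intro h1
          exact absurd (Finset.mem_range.mpr (by omega)) h1
    _ = ∑ i : Fin (k+1), MvPolynomial.C (lam i) * (u + MvPolynomial.C (c i) * v) ^ k := by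
        rw [show (∑ i : Fin (k+1), MvPolynomial.C (lam i) * (u + MvPolynomial.C (c i) * v) ^ k)
              = ∑ i : Fin (k+1), ∑ j ∈ Finset.range (k+1),
                  MvPolynomial.C (lam i * c i ^ (k - j)) * (u ^ j * v ^ (k - j) * (k.choose j : MvPolynomial (Fin 2) F))
            from Finset.sum_congr rfl (fun i _ => expand i), Finset.sum_comm]
        refine Finset.sum_congr rfl fun j _ => ?_
        rw [map_sum, Finset.sum_mul]


lemma rep_UV {F : Type*} [Field F] {k w : ℕ} {lam c : Fin (k+1) → F}
    (hid : ∀ u v : MvPolynomial (Fin 2) F,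
      u * v ^ (k-1) = ∑ i, MvPolynomial.C (lam i) * (u + MvPolynomial.C (c i) * v) ^ k)
    (hW : ∀ a : F, ∃ b : Fin w → F, a = ∑ i, b i ^ k)
    {B D : ℕ} (hkD : k * D ≤ B) {u v : MvPolynomial (Fin 2) F}
    (hu : u.totalDegree ≤ D) (hv : v.totalDegree ≤ D) :
    SWaux.Rep F k B ((k+1)*w) (u * v ^ (k-1)) := by
  rw [hid u v]
  have hcard : (Finset.univ : Finset (Fin (k+1))).card = k+1 := by simp
  have H : ∀ i : Fin (k+1),
      SWaux.Rep F k B w (MvPolynomial.C (lam i) * (u + MvPolynomial.C (c i) * v) ^ k) := ?_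
  · have := SWaux.rep_sum (Finset.univ : Finset (Fin (k+1)))
      (fun i => MvPolynomial.C (lam i) * (u + MvPolynomial.C (c i) * v) ^ k) (fun i _ => H i)
    rwa [hcard] at this
  intro i
  obtain ⟨b, hb⟩ := hW (lam i)
  refine ⟨fun j => MvPolynomial.C (b j) * (u + MvPolynomial.C (c i) * v), ?_, ?_⟩
  · rw [hb, map_sum, Finset.sum_mul]
    refine Finset.sum_congr rfl fun j _ => ?_
    rw [mul_pow, map_pow]
  · intro j
    have hX : (u + MvPolynomial.C (c i) * v).totalDegree ≤ D := by
      refine le_trans (MvPolynomial.totalDegree_add _ _) (max_le hu ?_)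
      refine le_trans (MvPolynomial.totalDegree_mul _ _) ?_
      simpa [MvPolynomial.totalDegree_C] using hv
    have hQ : (MvPolynomial.C (b j) * (u + MvPolynomial.C (c i) * v)).totalDegree ≤ D := by
      refine le_trans (MvPolynomial.totalDegree_mul _ _) ?_
      simpa [MvPolynomial.totalDegree_C] using hX
    refine le_trans (MvPolynomial.totalDegree_pow _ _) (le_trans ?_ hkD)
    exact Nat.mul_le_mul_left _ hQ


/-- Strict Waring for `F[x,y]`: every polynomial of degree `d ≥ 2k⁴` is a sum of
`s` `k`-th powers with `deg Qᵢ^k ≤ d + k³` and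
`s ≤ 2k³·ln(d/k + 1)·ln(2k) + 7k⁴·ln(k)·w²`. -/
theorem strict_waring_two_variables (F : Type*) [Field F] (k w : ℕ) (hk : 2 ≤ k)
    (hw : 1 ≤ w) (hcard : (k : Cardinal) < Cardinal.mk F) (hchar : (k : F) ≠ 0)
    (hW : ∀ a : F, ∃ b : Fin w → F, a = ∑ i, b i ^ k)
    (d : ℕ) (hd : 2 * k ^ 4 ≤ d)
    (P : MvPolynomial (Fin 2) F) (hP : P.totalDegree = d) :
    ∃ (s : ℕ) (Q : Fin s → MvPolynomial (Fin 2) F),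
      P = ∑ i, Q i ^ k ∧
      (∀ i, (Q i ^ k).totalDegree ≤ d + k ^ 3) ∧
      (s : ℝ) ≤ 2 * (k : ℝ) ^ 3 * Real.log ((d : ℝ) / k + 1) * Real.log (2 * k) +
        7 * (k : ℝ) ^ 4 * Real.log k * (w : ℝ) ^ 2 := by
  classical
  have hd' : 2*k^4 ≤ d := hd
  obtain ⟨lam, c, hid⟩ := exists_identity F k hk hcard hchar
  set E : (Fin 2 →₀ ℕ) → ℕ × ℕ := fun m =>
    (SWaux.sfun k d (m 0) (m 0 + m 1),
     SWaux.mfun k d (m 0 + m 1) - SWaux.sfun k d (m 0) (m 0 + m 1)) with hE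
  set fp : ℕ × ℕ → (Fin 2 →₀ ℕ) := fun p => Finsupp.single 0 p.1 + Finsupp.single 1 p.2 with hfp
  set T : Finset (ℕ × ℕ) := P.support.image E with hT
  have hfp0 : ∀ p : ℕ × ℕ, fp p 0 = p.1 := by intro p; simp [hfp, Finsupp.single_apply]
  have hfp1 : ∀ p : ℕ × ℕ, fp p 1 = p.2 := by intro p; simp [hfp, Finsupp.single_apply]
  have hsupp : ∀ m ∈ P.support, m 0 + m 1 ≤ d := by
    intro m hm
    have h1 := MvPolynomial.le_totalDegree hm
    rw [hP] at h1
    calc m 0 + m 1 = m.sum (fun _ e => e) := by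
          rw [Finsupp.sum_fintype _ _ (fun _ => rfl), Fin.sum_univ_two]
    _ ≤ d := h1
  -- componentwise bound on corners
  have hEle : ∀ m ∈ P.support, fp ((k-1)*(E m).1, (k-1)*(E m).2) ≤ m := by
    intro m hm
    rw [Finsupp.le_def]
    intro i
    fin_cases i
    · simpa [hfp, Finsupp.single_apply] using SWaux.hP1 (k := k) (d := d) (a := m 0) (h := m 0 + m 1) hk hd'
    · simpa [hfp, Finsupp.single_apply] using SWaux.hP2 hk hd' (hsupp m hm)
  -- the decomposition into corner pieces
  have hdecomp : P = ∑ e ∈ T,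
      (∑ m ∈ P.support.filter (fun m => E m = e),
        MvPolynomial.monomial (m - fp ((k-1)*e.1, (k-1)*e.2)) (MvPolynomial.coeff m P))
      * (MvPolynomial.monomial (fp e) 1) ^ (k-1) := by
    have hsmul : ∀ p : ℕ × ℕ, (k-1) • fp p = fp ((k-1)*p.1, (k-1)*p.2) := by
      intro p
      simp [hfp, smul_add, Finsupp.smul_single, smul_eq_mul]
    calc P = ∑ m ∈ P.support, MvPolynomial.monomial m (MvPolynomial.coeff m P) :=
          (MvPolynomial.support_sum_monomial_coeff P).symm
    _ = ∑ e ∈ T, ∑ m ∈ P.support.filter (fun m => E m = e),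
          MvPolynomial.monomial m (MvPolynomial.coeff m P) :=
          (Finset.sum_fiberwise_of_maps_to (fun m hm => Finset.mem_image_of_mem E hm) _).symm
    _ = _ := by
      refine Finset.sum_congr rfl fun e he => ?_
      rw [Finset.sum_mul]
      refine Finset.sum_congr rfl fun m hm => ?_
      obtain ⟨hmsupp, hme⟩ := Finset.mem_filter.mp hm
      rw [MvPolynomial.monomial_pow, one_pow, hsmul, MvPolynomial.monomial_mul, mul_one,
        tsub_add_cancel_of_le (hme ▸ hEle m hmsupp)]
  -- Rep
  have hkD : k * SWaux.DD k d ≤ d + k^3 := (SWaux.hDD1 hk hd').1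
  have hrep : SWaux.Rep F k (d + k^3) (T.card * ((k+1)*w)) P := by
    rw [hdecomp]
    refine SWaux.rep_sum T _ (fun e he => ?_)
    refine rep_UV hid hW hkD ?_ ?_
    · refine le_trans (MvPolynomial.totalDegree_finset_sum _ _) (Finset.sup_le fun m hm => ?_)
      obtain ⟨hmsupp, hme⟩ := Finset.mem_filter.mp hm
      have hne : MvPolynomial.coeff m P ≠ 0 := MvPolynomial.mem_support_iff.mp hmsupp
      rw [MvPolynomial.totalDegree_monomial _ hne]
      have hsum : ((m - fp ((k-1)*e.1, (k-1)*e.2)).sum fun _ e => e)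
          = (m 0 - (k-1)*e.1) + (m 1 - (k-1)*e.2) := by
        rw [Finsupp.sum_fintype _ _ (fun _ => rfl), Fin.sum_univ_two]
        rw [Finsupp.tsub_apply, Finsupp.tsub_apply, hfp0, hfp1]
      rw [hsum]
      -- arithmetic
      have h1 : (k-1)*(E m).1 ≤ m 0 := SWaux.hP1 hk hd'
      have h2 : (k-1)*(E m).2 ≤ m 1 := SWaux.hP2 hk hd' (hsupp m hmsupp)
      have hsle : SWaux.sfun k d (m 0) (m 0 + m 1) ≤ SWaux.mfun k d (m 0 + m 1) :=
        min_le_right _ _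
      have h4 : (k-1)*(E m).1 + (k-1)*(E m).2 = (k-1) * SWaux.mfun k d (m 0 + m 1) := by
        rw [hE]
        dsimp only
        rw [Nat.mul_sub]
        have := Nat.mul_le_mul_left (k-1) hsle
        omega
      have h3 : m 0 + m 1 ≤ SWaux.DD k d + (k-1) * SWaux.mfun k d (m 0 + m 1) :=
        SWaux.hP3 hk hd' (hsupp m hmsupp)
      rw [← hme]
      omega
    · have hone : (1 : F) ≠ 0 := one_ne_zero
      rw [MvPolynomial.totalDegree_monomial _ hone]
      have hsum : ((fp e).sum fun _ e => e) = e.1 + e.2 := by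
        rw [Finsupp.sum_fintype _ _ (fun _ => rfl), Fin.sum_univ_two, hfp0, hfp1]
      rw [hsum]
      obtain ⟨m, hm, rfl⟩ := Finset.mem_image.mp he
      have hsle : SWaux.sfun k d (m 0) (m 0 + m 1) ≤ SWaux.mfun k d (m 0 + m 1) :=
        min_le_right _ _
      have : (E m).1 + (E m).2 = SWaux.mfun k d (m 0 + m 1) := by
        rw [hE]; dsimp only; omega
      rw [this]
      exact SWaux.hP4 hk hd'
  -- cardinality bound
  have hTcard : T.card ≤ 4*k^2 := by
    have hsub : T ⊆ Finset.image (fun p : ℕ × ℕ =>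
        (min (SWaux.mu k d * p.2) (min (SWaux.mu k d * p.1) (SWaux.MM k d)),
         min (SWaux.mu k d * p.1) (SWaux.MM k d)
           - min (SWaux.mu k d * p.2) (min (SWaux.mu k d * p.1) (SWaux.MM k d))))
        ((Finset.range (2*k)) ×ˢ (Finset.range (2*k))) := by
      intro e he
      obtain ⟨m, hm, rfl⟩ := Finset.mem_image.mp he
      refine Finset.mem_image.mpr
        ⟨(SWaux.lev k d (m 0 + m 1), min ((m 0) / SWaux.Del k d) (2*k-1)), ?_, ?_⟩
      · rw [Finset.mem_product]
        constructor
        · rw [Finset.mem_range]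
          have := SWaux.hlev_bound hk hd' (hsupp m hm)
          omega
        · rw [Finset.mem_range]
          have : min ((m 0) / SWaux.Del k d) (2*k-1) ≤ 2*k-1 := min_le_right _ _
          omega
      · rw [hE]
        dsimp only
        have hmf : min (SWaux.mu k d * SWaux.lev k d (m 0 + m 1)) (SWaux.MM k d)
            = SWaux.mfun k d (m 0 + m 1) := rfl
        rw [hmf]
        have hs := SWaux.hPJ hk hd' (a := m 0) (hsupp m hm)
        rw [← hs]
    calc T.card ≤ _ := Finset.card_le_card hsub
    _ ≤ ((Finset.range (2*k)) ×ˢ (Finset.range (2*k))).card := Finset.card_image_le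
    _ = 4*k^2 := by rw [Finset.card_product, Finset.card_range]; ring
  -- conclude
  obtain ⟨Q, hQ1, hQ2⟩ := hrep
  refine ⟨T.card * ((k+1)*w), Q, hQ1, hQ2, ?_⟩
  -- numeric bound
  have hN : T.card * ((k+1)*w) ≤ 6*k^3*w := by
    have h1 : T.card * ((k+1)*w) ≤ (4*k^2) * ((k+1)*w) :=
      Nat.mul_le_mul_right _ hTcard
    have h2 : (4*k^2) * ((k+1)*w) ≤ (6*k^3) * w := by
      have : 4*k^2*(k+1) ≤ 6*k^3 := by nlinarith [hk]
      calc (4*k^2) * ((k+1)*w) = (4*k^2*(k+1)) * w := by ring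
      _ ≤ (6*k^3) * w := Nat.mul_le_mul_right _ this
    calc T.card * ((k+1)*w) ≤ _ := h1
    _ ≤ _ := h2
    _ = 6*k^3*w := by ring
  have hk2 : (2:ℝ) ≤ (k:ℝ) := by exact_mod_cast hk
  have hw1 : (1:ℝ) ≤ (w:ℝ) := by exact_mod_cast hw
  have hlogk : (0.6931:ℝ) ≤ Real.log k := by
    have h2 : (0.6931:ℝ) ≤ Real.log 2 := by
      have := Real.log_two_gt_d9
      norm_num at this ⊢
      linarith
    refine le_trans h2 ?_
    exact Real.log_le_log (by norm_num) hk2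
  have hNR : ((T.card * ((k+1)*w) : ℕ) : ℝ) ≤ 6*(k:ℝ)^3*(w:ℝ) := by
    have := hN
    exact_mod_cast this
  refine le_trans hNR ?_
  have hfirst : 0 ≤ 2 * (k : ℝ) ^ 3 * Real.log ((d : ℝ) / k + 1) * Real.log (2 * k) := by
    have hl1 : 0 ≤ Real.log ((d : ℝ) / k + 1) := by
      apply Real.log_nonneg
      have : 0 ≤ (d:ℝ)/k := by positivity
      linarith
    have hl2 : 0 ≤ Real.log (2 * k) := by
      apply Real.log_nonneg
      linarith
    positivity
  have hsecond : 6*(k:ℝ)^3*(w:ℝ) ≤ 7 * (k : ℝ) ^ 4 * Real.log k * (w : ℝ) ^ 2 := by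
    have A : (0:ℝ) ≤ (k:ℝ)^3 * w := by positivity
    have B : (6:ℝ) ≤ 7 * (k:ℝ) * Real.log k * w := by
      have hB1 : (9:ℝ) ≤ 7*(k:ℝ)*Real.log k := by nlinarith [hlogk, hk2]
      nlinarith [hB1, hw1, hlogk, hk2]
    calc (6:ℝ)*(k:ℝ)^3*(w:ℝ) = 6 * ((k:ℝ)^3*(w:ℝ)) := by ring
    _ ≤ (7 * (k:ℝ) * Real.log k * w) * ((k:ℝ)^3*(w:ℝ)) := mul_le_mul_of_nonneg_right B A
    _ = 7 * (k : ℝ) ^ 4 * Real.log k * (w : ℝ) ^ 2 := by ring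
  linarith [hfirst, hsecond]
end
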